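/- arXiv:1106.2256 — 3 statements merged into one kernel-verified Lean document; each statement's English description precedes it below -/
import Mathlib

section
/- Let g be the standard Gaussian density on ℝ and let ρ = gF be a probability density with F : ℝ → [0,∞) log-concave. Then the rescaled self-convolution ρ⊛ρ again has the form ρ⊛ρ = gF₂ where F₂(x) = ∫ g(y) F((x+y)/√2) F((x−y)/√2) dy is log-concave. In other words, if ρ/g is log-concave then (ρ⊛ρ)/g is log-concave. -/
open MeasureTheory Real Set Pointwise

noncomputable section

/-- The standard Gaussian density on ℝ. -/
def gaussPDF (x : ℝ) : ℝ := (Real.sqrt (2 * Real.pi))⁻¹ * Real.exp (-x ^ 2 / 2)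

/-- Convolution of two densities on ℝ. -/
def convDens (f g : ℝ → ℝ) (x : ℝ) : ℝ := ∫ y, f (x - y) * g y

/-- `iterConv ρ n` is the `(n+1)`-fold convolution of `ρ` with itself. -/
def iterConv (ρ : ℝ → ℝ) : ℕ → ℝ → ℝ
  | 0 => ρ
  | n + 1 => convDens (iterConv ρ n) ρ

/-- `rescaledConv ρ n` is the density of `n^{-1/2}(X₁ + ⋯ + Xₙ)` for i.i.d. `Xⱼ`
with density `ρ`, i.e. `x ↦ √n (ρ∗⋯∗ρ)(√n x)` with the `n`-fold convolution. -/
def rescaledConv (ρ : ℝ → ℝ) (n : ℕ) (x : ℝ) : ℝ :=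
  Real.sqrt n * iterConv ρ (n - 1) (Real.sqrt n * x)

/-- The density of `(X+Y)/√2` for independent `X`, `Y` with densities `ρ`, `η`. -/
def rescaledConvPair (ρ η : ℝ → ℝ) (x : ℝ) : ℝ :=
  Real.sqrt 2 * convDens ρ η (Real.sqrt 2 * x)

/-- The rescaled self-convolution `ρ ⊛ ρ`. -/
def selfConv (ρ : ℝ → ℝ) : ℝ → ℝ := rescaledConvPair ρ ρ

/-- Entropy `S(ρ) = -∫ ρ ln ρ`. -/
def entropy (ρ : ℝ → ℝ) : ℝ := -∫ x, ρ x * Real.log (ρ x)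

/-- Relative entropy `D(ρ) = ∫ ρ ln (ρ/g)` with respect to the standard Gaussian. -/
def relEntropy (ρ : ℝ → ℝ) : ℝ := ∫ x, ρ x * Real.log (ρ x / gaussPDF x)

/-- Fisher information `I(ρ) = 4 ∫ |(√ρ)'|²`. -/
def fisherInfo (ρ : ℝ → ℝ) : ℝ := 4 * ∫ x, (deriv (fun y => Real.sqrt (ρ y)) x) ^ 2

/-- Relative Fisher information `J(ρ) = 4 ∫ |((d/dx) + x/2)√ρ|²`. -/
def relFisher (ρ : ℝ → ℝ) : ℝ :=
  4 * ∫ x, (deriv (fun y => Real.sqrt (ρ y)) x + (x / 2) * Real.sqrt (ρ x)) ^ 2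

/-- The ψ-function `ψ_ρ(R) = ∫_{|x| ≥ R} x² ρ(x) dx`. -/
def psiFun (ρ : ℝ → ℝ) (R : ℝ) : ℝ := ∫ x in {x : ℝ | R ≤ |x|}, x ^ 2 * ρ x

/-- A nonnegative function is log-concave if
`F((1-t)x + ty) ≥ F(x)^{1-t} F(y)^{t}` for `t ∈ [0,1]`. -/
def LogConcaveFun (F : ℝ → ℝ) : Prop :=
  (∀ x, 0 ≤ F x) ∧
  ∀ x y t : ℝ, 0 ≤ t → t ≤ 1 → F x ^ (1 - t) * F y ^ t ≤ F ((1 - t) * x + t * y)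



lemma compactBM {K L : Set ℝ} (hK : IsCompact K) (hL : IsCompact L)
    (hKne : K.Nonempty) (hLne : L.Nonempty) :
    volume K + volume L ≤ volume (K + L) := by
  set a := sSup K with ha
  set b := sInf L with hb
  have haK : a ∈ K := hK.sSup_mem hKne
  have hbL : b ∈ L := hL.sInf_mem hLne
  set X : Set ℝ := (fun x => x + b) '' K with hX
  set Y : Set ℝ := (fun y => a + y) '' L with hY
  have hXsub : X ⊆ K + L := by
    rintro _ ⟨k, hk, rfl⟩; exact add_mem_add hk hbL
  have hYsub : Y ⊆ K + L := by
    rintro _ ⟨l, hl, rfl⟩; exact add_mem_add haK hl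
  have hXY : X ∩ Y ⊆ {a + b} := by
    rintro x ⟨⟨k, hk, rfl⟩, l, hl, hEq⟩
    have h1 : k + b ≤ a + b := by
      have := le_csSup hK.bddAbove hk; linarith
    have h2 : a + b ≤ k + b := by
      have hbl : b ≤ l := csInf_le hL.bddBelow hl
      have : a + b ≤ a + l := by linarith
      simpa [hEq] using this
    simp only [mem_singleton_iff]
    exact le_antisymm h1 h2
  have hXvol : volume X = volume K := by
    have hset : X = (fun x => x + -b) ⁻¹' K := by
      ext x
      constructor
      · rintro ⟨k, hk, rfl⟩; simpa using hk
      · intro h; exact ⟨x + -b, h, by ring⟩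
    rw [hset]
    exact measure_preimage_add_right volume (-b) K
  have hYvol : volume Y = volume L := by
    have hset : Y = (fun y => -a + y) ⁻¹' L := by
      ext x
      constructor
      · rintro ⟨l, hl, rfl⟩; simpa using hl
      · intro h; exact ⟨-a + x, h, by ring⟩
    rw [hset]
    exact measure_preimage_add volume (-a) L
  have hYmeas : MeasurableSet Y := ((Homeomorph.addLeft a).isCompact_image.2 hL).measurableSet
  calc volume K + volume L = volume X + volume Y := by rw [hXvol, hYvol]
    _ = volume (X ∪ Y) + volume (X ∩ Y) := (measure_union_add_inter X hYmeas).symm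
    _ ≤ volume (K + L) + volume ({a + b} : Set ℝ) :=
        add_le_add (measure_mono (union_subset hXsub hYsub)) (measure_mono hXY)
    _ = volume (K + L) := by simp

lemma BMsets {A B S : Set ℝ} (hA : MeasurableSet A) (hB : MeasurableSet B)
    (hAne : A.Nonempty) (hBne : B.Nonempty)
    (hAfin : volume A ≠ ⊤) (hBfin : volume B ≠ ⊤) {c d : ℝ}
    (hc : 0 ≤ c) (hd : 0 ≤ d) (hcd : c + d ≤ 1)
    (hsub : ∀ u ∈ A, ∀ v ∈ B, c * u + d * v ∈ S) :
    ENNReal.ofReal c * volume A + ENNReal.ofReal d * volume B ≤ volume S := by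
  apply ENNReal.le_of_forall_pos_le_add
  intro ε hε _
  obtain ⟨u₀, hu₀⟩ := hAne
  obtain ⟨v₀, hv₀⟩ := hBne
  have hε2 : (ε : ENNReal) / 2 ≠ 0 := by
    simp [ENNReal.div_eq_zero_iff, (ENNReal.coe_pos.2 hε).ne']
  obtain ⟨K₀, hK₀A, hK₀c, hK₀v⟩ := hA.exists_isCompact_lt_add hAfin hε2
  obtain ⟨L₀, hL₀B, hL₀c, hL₀v⟩ := hB.exists_isCompact_lt_add hBfin hε2
  set K := K₀ ∪ {u₀} with hK
  set L := L₀ ∪ {v₀} with hL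
  have hKc : IsCompact K := hK₀c.union isCompact_singleton
  have hLc : IsCompact L := hL₀c.union isCompact_singleton
  have hKA : K ⊆ A := union_subset hK₀A (by simpa using hu₀)
  have hLB : L ⊆ B := union_subset hL₀B (by simpa using hv₀)
  have hKv : volume A ≤ volume K + ε / 2 :=
    le_trans hK₀v.le (add_le_add (measure_mono subset_union_left) le_rfl)
  have hLv : volume B ≤ volume L + ε / 2 :=
    le_trans hL₀v.le (add_le_add (measure_mono subset_union_left) le_rfl)
  have hsum : (c • K) + (d • L) ⊆ S := by
    rintro _ ⟨_, ⟨u, hu, rfl⟩, _, ⟨v, hv, rfl⟩, rfl⟩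
    exact hsub u (hKA hu) v (hLB hv)
  have hvolK : volume (c • K) = ENNReal.ofReal c * volume K := by
    rw [Measure.addHaar_smul_of_nonneg volume hc]
    simp
  have hvolL : volume (d • L) = ENNReal.ofReal d * volume L := by
    rw [Measure.addHaar_smul_of_nonneg volume hd]
    simp
  have hBM : volume (c • K) + volume (d • L) ≤ volume S := by
    refine le_trans (compactBM (hKc.smul c) (hLc.smul d) ?_ ?_) (measure_mono hsum)
    · exact (Set.Nonempty.smul_set ⟨u₀, by simp [hK]⟩)
    · exact (Set.Nonempty.smul_set ⟨v₀, by simp [hL]⟩)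
  calc ENNReal.ofReal c * volume A + ENNReal.ofReal d * volume B
      ≤ ENNReal.ofReal c * (volume K + ε/2) + ENNReal.ofReal d * (volume L + ε/2) := by
        gcongr
    _ ≤ (ENNReal.ofReal c * volume K + ENNReal.ofReal d * volume L)
          + (ENNReal.ofReal c * (ε/2) + ENNReal.ofReal d * (ε/2)) := by
        rw [mul_add, mul_add]; ring_nf; exact le_refl _
    _ ≤ volume S + ε := by
        refine add_le_add ?_ ?_
        · rw [← hvolK, ← hvolL]; exact hBM
        · calc ENNReal.ofReal c * (ε/2) + ENNReal.ofReal d * (ε/2)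
              = ENNReal.ofReal (c+d) * (ε/2) := by
                rw [ENNReal.ofReal_add hc hd, add_mul]
            _ ≤ 1 * ((ε : ENNReal)/2) := by
                gcongr
                exact ENNReal.ofReal_le_one.2 hcd
            _ ≤ (ε : ENNReal) := by rw [one_mul]; exact ENNReal.half_le_self

lemma PLcore {t : ℝ} (ht0 : 0 < t) (ht1 : t < 1) {f m h : ℝ → ℝ}
    (hfm : Measurable f) (hmm : Measurable m) (hhm : Measurable h)
    (hf0 : ∀ x, 0 ≤ f x) (hm0 : ∀ x, 0 ≤ m x) (hh0 : ∀ x, 0 ≤ h x)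
    (hfi : Integrable f) (hmi : Integrable m) (hhi : Integrable h)
    (hf1 : ∀ u, f u ≤ 1) (hm1 : ∀ u, m u ≤ 1)
    (hfs : ∀ s, s < 1 → ∃ u, s < f u) (hms : ∀ s, s < 1 → ∃ v, s < m v)
    (hyp : ∀ u v, f u ^ (1-t) * m v ^ t ≤ h ((1-t)*u + t*v)) :
    (1-t) * (∫ x, f x) + t * (∫ x, m x) ≤ ∫ x, h x := by
  set φf := fun s : ℝ => volume {u : ℝ | s < f u} with hφf
  set φm := fun s : ℝ => volume {u : ℝ | s < m u} with hφm
  set φh := fun s : ℝ => volume {u : ℝ | s < h u} with hφh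
  have hAntif : Antitone φf := fun s s' hss =>
    measure_mono (fun u hu => lt_of_le_of_lt hss hu)
  have hAntim : Antitone φm := fun s s' hss =>
    measure_mono (fun u hu => lt_of_le_of_lt hss hu)
  have hAntih : Antitone φh := fun s s' hss =>
    measure_mono (fun u hu => lt_of_le_of_lt hss hu)
  have hmf : Measurable φf := hAntif.measurable
  have hmm' : Measurable φm := hAntim.measurable
  have hmh : Measurable φh := hAntih.measurable
  -- pointwise superlevel inequality
  have key : ∀ s ∈ Ioo (0:ℝ) 1,
      ENNReal.ofReal (1-t) * φf s + ENNReal.ofReal t * φm s ≤ φh s := by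
    intro s hs
    refine BMsets (measurableSet_lt measurable_const hfm)
      (measurableSet_lt measurable_const hmm) (hfs s hs.2) (hms s hs.2) ?_ ?_
      (by linarith [ht0]) ht0.le (by linarith) ?_
    · exact ne_top_of_le_ne_top (hfi.measure_ge_lt_top hs.1).ne
        (measure_mono (Set.setOf_subset_setOf.2 fun u => le_of_lt))
    · exact ne_top_of_le_ne_top (hmi.measure_ge_lt_top hs.1).ne
        (measure_mono (Set.setOf_subset_setOf.2 fun u => le_of_lt))
    · intro u hu v hv
      have hs' : s = s ^ (1-t) * s ^ t := by
        rw [← Real.rpow_add hs.1]; norm_num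
      have h1 : s ^ (1-t) < f u ^ (1-t) :=
        Real.rpow_lt_rpow hs.1.le hu (by linarith)
      have h2 : s ^ t < m v ^ t := Real.rpow_lt_rpow hs.1.le hv ht0
      have : s < f u ^ (1-t) * m v ^ t := by
        rw [hs']
        exact mul_lt_mul'' h1 h2 (Real.rpow_nonneg hs.1.le _) (Real.rpow_nonneg hs.1.le _)
      exact lt_of_lt_of_le this (hyp u v)
  -- layer cake
  have lcf := lintegral_eq_lintegral_meas_lt volume (ae_of_all _ hf0) hfm.aemeasurable
  have lcm := lintegral_eq_lintegral_meas_lt volume (ae_of_all _ hm0) hmm.aemeasurable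
  have lch := lintegral_eq_lintegral_meas_lt volume (ae_of_all _ hh0) hhm.aemeasurable
  -- restrict to Ioo 0 1 for f and m
  have hsplit : ∀ (φ : ℝ → ENNReal), (∀ s, 1 ≤ s → φ s = 0) →
      ∫⁻ s in Ioi (0:ℝ), φ s = ∫⁻ s in Ioo (0:ℝ) 1, φ s := by
    intro φ hφ
    rw [← Ioo_union_Ici_eq_Ioi (zero_lt_one (α := ℝ)),
      lintegral_union measurableSet_Ici (by
        refine Set.disjoint_left.2 fun s hs h1 => ?_
        exact absurd h1 (not_le.2 hs.2))]
    have : ∫⁻ s in Ici (1:ℝ), φ s = 0 := by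
      rw [setLIntegral_congr_fun measurableSet_Ici
        (fun s hs => hφ s hs), lintegral_zero]
    rw [this, add_zero]
  have hzf : ∀ s, (1:ℝ) ≤ s → φf s = 0 := by
    intro s hs
    have : {u : ℝ | s < f u} = ∅ :=
      eq_empty_iff_forall_notMem.2 fun u hu => absurd (lt_of_le_of_lt hs hu) (not_lt.2 (hf1 u))
    simp [hφf, this]
  have hzm : ∀ s, (1:ℝ) ≤ s → φm s = 0 := by
    intro s hs
    have : {u : ℝ | s < m u} = ∅ :=
      eq_empty_iff_forall_notMem.2 fun u hu => absurd (lt_of_le_of_lt hs hu) (not_lt.2 (hm1 u))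
    simp [hφm, this]
  -- main chain
  have main : ENNReal.ofReal ((1-t) * ∫ x, f x) + ENNReal.ofReal (t * ∫ x, m x)
      ≤ ENNReal.ofReal (∫ x, h x) := by
    rw [ENNReal.ofReal_mul (by linarith : (0:ℝ) ≤ 1 - t), ENNReal.ofReal_mul ht0.le,
      ofReal_integral_eq_lintegral_ofReal hfi (ae_of_all _ hf0),
      ofReal_integral_eq_lintegral_ofReal hmi (ae_of_all _ hm0),
      ofReal_integral_eq_lintegral_ofReal hhi (ae_of_all _ hh0),
      lcf, lcm, lch, hsplit φf hzf, hsplit φm hzm]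
    refine le_trans (le_of_eq ?_)
      (le_trans (setLIntegral_mono hmh key) (lintegral_mono_set Ioo_subset_Ioi_self))
    rw [lintegral_add_left (hmf.const_mul _), lintegral_const_mul _ hmf,
      lintegral_const_mul _ hmm']
  have h2 : ENNReal.ofReal ((1-t) * (∫ x, f x) + t * (∫ x, m x))
      ≤ ENNReal.ofReal (∫ x, h x) := by
    refine le_trans (le_of_eq (ENNReal.ofReal_add
      (mul_nonneg (by linarith : (0:ℝ) ≤ 1 - t) (integral_nonneg hf0 : (0:ℝ) ≤ ∫ x, f x))
      (mul_nonneg ht0.le (integral_nonneg hm0 : (0:ℝ) ≤ ∫ x, m x)))) main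
  exact (ENNReal.ofReal_le_ofReal_iff (integral_nonneg hh0 : (0:ℝ) ≤ ∫ x, h x)).1 h2

lemma PLfull {t : ℝ} (ht0 : 0 < t) (ht1 : t < 1) {f m h : ℝ → ℝ}
    (hfm : Measurable f) (hmm : Measurable m) (hhm : Measurable h)
    (hf0 : ∀ x, 0 ≤ f x) (hm0 : ∀ x, 0 ≤ m x) (hh0 : ∀ x, 0 ≤ h x)
    (hfi : Integrable f) (hmi : Integrable m) (hhi : Integrable h)
    (hfb : BddAbove (Set.range f)) (hmb : BddAbove (Set.range m))
    (hyp : ∀ u v, f u ^ (1-t) * m v ^ t ≤ h ((1-t)*u + t*v)) :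
    (∫ x, f x) ^ (1-t) * (∫ x, m x) ^ t ≤ ∫ x, h x := by
  have ht1' : (0:ℝ) < 1 - t := by linarith
  rcases eq_or_lt_of_le (integral_nonneg hf0 : (0:ℝ) ≤ ∫ x, f x) with hIf | hIf
  · rw [← hIf, Real.zero_rpow ht1'.ne', zero_mul]
    exact integral_nonneg hh0
  rcases eq_or_lt_of_le (integral_nonneg hm0 : (0:ℝ) ≤ ∫ x, m x) with hIm | hIm
  · rw [← hIm, Real.zero_rpow ht0.ne', mul_zero]
    exact integral_nonneg hh0
  -- positive sup
  have hfex : ∃ u, 0 < f u := by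
    by_contra hc
    push_neg at hc
    have : ∫ x, f x = 0 := by
      have : f = fun _ => (0:ℝ) := funext fun u => le_antisymm (hc u) (hf0 u)
      rw [this, integral_zero]
    linarith
  have hmex : ∃ v, 0 < m v := by
    by_contra hc
    push_neg at hc
    have : ∫ x, m x = 0 := by
      have : m = fun _ => (0:ℝ) := funext fun u => le_antisymm (hc u) (hm0 u)
      rw [this, integral_zero]
    linarith
  obtain ⟨u₀, hu₀⟩ := hfex
  obtain ⟨v₀, hv₀⟩ := hmex
  set Mf := sSup (Set.range f) with hMf
  set Mm := sSup (Set.range m) with hMm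
  have hMfpos : 0 < Mf := lt_of_lt_of_le hu₀ (le_csSup hfb ⟨u₀, rfl⟩)
  have hMmpos : 0 < Mm := lt_of_lt_of_le hv₀ (le_csSup hmb ⟨v₀, rfl⟩)
  have hMfub : ∀ u, f u ≤ Mf := fun u => le_csSup hfb ⟨u, rfl⟩
  have hMmub : ∀ u, m u ≤ Mm := fun u => le_csSup hmb ⟨u, rfl⟩
  set H := Mf ^ (1-t) * Mm ^ t with hH
  have hHpos : 0 < H := mul_pos (Real.rpow_pos_of_pos hMfpos _) (Real.rpow_pos_of_pos hMmpos _)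
  have core := PLcore ht0 ht1 (f := fun u => f u / Mf) (m := fun u => m u / Mm)
    (h := fun w => h w / H)
    (hfm.div_const _) (hmm.div_const _) (hhm.div_const _)
    (fun x => div_nonneg (hf0 x) hMfpos.le)
    (fun x => div_nonneg (hm0 x) hMmpos.le)
    (fun x => div_nonneg (hh0 x) hHpos.le)
    (hfi.div_const _) (hmi.div_const _) (hhi.div_const _)
    (fun u => (div_le_one hMfpos).2 (hMfub u))
    (fun u => (div_le_one hMmpos).2 (hMmub u))
    (fun s hs => by
      obtain ⟨_, ⟨u, rfl⟩, hu⟩ := exists_lt_of_lt_csSup (Set.range_nonempty f)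
        (by nlinarith : s * Mf < Mf)
      exact ⟨u, (lt_div_iff₀ hMfpos).2 hu⟩)
    (fun s hs => by
      obtain ⟨_, ⟨v, rfl⟩, hv⟩ := exists_lt_of_lt_csSup (Set.range_nonempty m)
        (by nlinarith : s * Mm < Mm)
      exact ⟨v, (lt_div_iff₀ hMmpos).2 hv⟩)
    (fun u v => by
      have : (f u / Mf) ^ (1-t) * (m v / Mm) ^ t
          = (f u ^ (1-t) * m v ^ t) / H := by
        rw [Real.div_rpow (hf0 u) hMfpos.le, Real.div_rpow (hm0 v) hMmpos.le,
          div_mul_div_comm, hH]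
      rw [this]
      exact div_le_div_of_nonneg_right (hyp u v) hHpos.le)
  -- unfold the integrals of the normalized functions
  rw [integral_div, integral_div, integral_div] at core
  set a := (∫ x, f x) / Mf with hadef
  set b := (∫ x, m x) / Mm with hbdef
  have hap : 0 ≤ a := div_nonneg hIf.le hMfpos.le
  have hbp : 0 ≤ b := div_nonneg hIm.le hMmpos.le
  have amgm : a ^ (1-t) * b ^ t ≤ (1-t) * a + t * b :=
    Real.geom_mean_le_arith_mean2_weighted ht1'.le ht0.le hap hbp (by ring)
  have key : a ^ (1-t) * b ^ t ≤ (∫ x, h x) / H := le_trans amgm core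
  have hfa : ∫ x, f x = Mf * a := by
    rw [hadef, mul_div_cancel₀]
    exact hMfpos.ne'
  have hmb2 : ∫ x, m x = Mm * b := by
    rw [hbdef, mul_div_cancel₀]
    exact hMmpos.ne'
  calc (∫ x, f x) ^ (1-t) * (∫ x, m x) ^ t
      = (Mf * a) ^ (1-t) * (Mm * b) ^ t := by rw [hfa, hmb2]
    _ = H * (a ^ (1-t) * b ^ t) := by
        rw [Real.mul_rpow hMfpos.le hap, Real.mul_rpow hMmpos.le hbp, hH]; ring
    _ ≤ H * ((∫ x, h x) / H) := by
        exact mul_le_mul_of_nonneg_left key hHpos.le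
    _ = ∫ x, h x := by field_simp

lemma rpow_le_of_rpow_le {x M s : ℝ} (hx : 0 ≤ x) (hs : 0 < s) (hM : 1 ≤ M)
    (hle : x ^ s ≤ M) : x ≤ M ^ (1/s) := by
  rcases le_or_gt x 1 with hx1 | hx1
  · exact le_trans hx1 (Real.one_le_rpow hM (by positivity))
  · have hxx : (x ^ s) ^ (1/s) = x := by
      rw [← Real.rpow_mul hx, mul_one_div, div_self hs.ne', Real.rpow_one]
    rw [← hxx]
    exact Real.rpow_le_rpow (Real.rpow_nonneg hx _) hle (by positivity)

lemma logConcave_comp_neg {F : ℝ → ℝ} (hF : LogConcaveFun F) :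
    LogConcaveFun (fun v => F (-v)) := by
  refine ⟨fun x => hF.1 _, fun x y t ht0 ht1 => ?_⟩
  have h := hF.2 (-x) (-y) t ht0 ht1
  have heq : (1 - t) * -x + t * -y = -((1 - t) * x + t * y) := by ring
  rw [heq] at h
  exact h

lemma one_side {F : ℝ → ℝ} (hF : LogConcaveFun F) {p q u : ℝ} (hpq : p < q)
    (hFp : 0 < F p) (hqu : q ≤ u) :
    F u ≤ (max 1 (F q / min 1 (F p))) ^ ((u - p)/(q - p)) := by
  have hup : 0 < u - p := by linarith
  have hqp : 0 < q - p := by linarith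
  set s := (q - p)/(u - p) with hs
  have hs0 : 0 < s := by positivity
  have hs1 : s ≤ 1 := by
    rw [hs, div_le_one hup]; linarith
  have hcomb : (1 - s) * p + s * u = q := by
    have : s * (u - p) = q - p := by
      rw [hs, div_mul_cancel₀]; exact hup.ne'
    nlinarith [this]
  have hlc := hF.2 p u s hs0.le hs1
  rw [hcomb] at hlc
  set M := max 1 (F q / min 1 (F p)) with hM
  have hM1 : 1 ≤ M := le_max_left _ _
  have hmin : 0 < min 1 (F p) := lt_min one_pos hFp
  have hFp1s : min 1 (F p) ≤ F p ^ (1 - s) := by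
    rcases le_or_gt 1 (F p) with h1 | h1
    · exact le_trans (min_le_left _ _) (Real.one_le_rpow h1 (by linarith))
    · refine le_trans (min_le_right _ _) ?_
      calc F p = F p ^ (1:ℝ) := (Real.rpow_one _).symm
        _ ≤ F p ^ (1 - s) := Real.rpow_le_rpow_of_exponent_ge hFp h1.le (by linarith)
  have hFus : F u ^ s ≤ M := by
    have h2 : F p ^ (1 - s) * (F u ^ s) ≤ F q := hlc
    have h3 : min 1 (F p) * F u ^ s ≤ F q :=
      le_trans (mul_le_mul_of_nonneg_right hFp1s (Real.rpow_nonneg (hF.1 u) _)) h2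
    have h4 : F u ^ s ≤ F q / min 1 (F p) := by
      rw [le_div_iff₀ hmin]; linarith
    exact le_trans h4 (le_max_right _ _)
  have := rpow_le_of_rpow_le (hF.1 u) hs0 hM1 hFus
  have hinv : 1/s = (u - p)/(q - p) := by
    rw [hs, one_div, inv_div]
  rwa [hinv] at this

lemma rpow_exp_bound {M e c d u : ℝ} (hM : 1 ≤ M) (hd : 0 < d) (hc : 0 ≤ c)
    (he : e ≤ (|u| + c)/d) :
    M ^ e ≤ M ^ (c/d) * Real.exp ((Real.log M / d) * |u|) := by
  have hMpos : (0:ℝ) < M := by linarith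
  have h1 : M ^ e ≤ M ^ ((|u| + c)/d) := Real.rpow_le_rpow_of_exponent_le hM he
  have h2 : M ^ ((|u| + c)/d) = M ^ (c/d) * M ^ (|u|/d) := by
    rw [← Real.rpow_add hMpos]
    ring_nf
  have h3 : M ^ (|u|/d) = Real.exp ((Real.log M / d) * |u|) := by
    rw [Real.rpow_def_of_pos hMpos]
    congr 1
    ring
  rw [h2, h3] at h1
  exact h1

lemma expBound {F : ℝ → ℝ} (hF : LogConcaveFun F) {p q : ℝ} (hpq : p < q)
    (hFp : 0 < F p) (hFq : 0 < F q) :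
    ∃ C B : ℝ, 1 ≤ C ∧ 0 ≤ B ∧ ∀ u, F u ≤ C * Real.exp (B * |u|) := by
  set m := (p + q)/2 with hm
  have hpm : p < m := by rw [hm]; linarith
  have hmq : m < q := by rw [hm]; linarith
  have hFm : 0 < F m := by
    have := hF.2 p q (1/2) (by norm_num) (by norm_num)
    have hc : (1 - 1/2) * p + (1/2) * q = m := by rw [hm]; ring
    rw [hc] at this
    calc (0:ℝ) < F p ^ ((1:ℝ) - 1/2) * F q ^ ((1:ℝ)/2) := by
          positivity
      _ ≤ F m := this
  set M₁ := max 1 (F m / min 1 (F p)) with hM₁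
  set M₂ := max 1 (F m / min 1 (F q)) with hM₂
  have hM₁1 : 1 ≤ M₁ := le_max_left _ _
  have hM₂1 : 1 ≤ M₂ := le_max_left _ _
  set C₁ := M₁ ^ (|p|/(m - p)) with hC₁
  set B₁ := Real.log M₁ / (m - p) with hB₁
  set C₂ := M₂ ^ (|q|/(q - m)) with hC₂
  set B₂ := Real.log M₂ / (q - m) with hB₂
  have hmp : 0 < m - p := by linarith
  have hqm : 0 < q - m := by linarith
  have hC₁1 : 1 ≤ C₁ := Real.one_le_rpow hM₁1 (by positivity)
  have hC₂1 : 1 ≤ C₂ := Real.one_le_rpow hM₂1 (by positivity)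
  have hB₁0 : 0 ≤ B₁ := div_nonneg (Real.log_nonneg hM₁1) hmp.le
  have hB₂0 : 0 ≤ B₂ := div_nonneg (Real.log_nonneg hM₂1) hqm.le
  refine ⟨max C₁ C₂, max B₁ B₂, le_trans hC₁1 (le_max_left _ _),
    le_trans hB₁0 (le_max_left _ _), fun u => ?_⟩
  have habs : 0 ≤ |u| := abs_nonneg u
  rcases le_or_gt m u with hum | hum
  · -- u ≥ m : use pair (p, m)
    have h1 : F u ≤ M₁ ^ ((u - p)/(m - p)) := one_side hF hpm hFp hum
    have h2 : (u - p)/(m - p) ≤ (|u| + |p|)/(m - p) := by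
      apply div_le_div_of_nonneg_right ?_ hmp.le
      have h3 := le_abs_self u
      have h4 := neg_abs_le p
      linarith
    have h5 := rpow_exp_bound hM₁1 hmp (abs_nonneg p) h2
    refine le_trans h1 (le_trans h5 ?_)
    refine mul_le_mul (le_max_left _ _) ?_ (Real.exp_pos _).le
      (le_trans zero_le_one (le_trans hC₁1 (le_max_left _ _)))
    exact Real.exp_le_exp.2 (mul_le_mul_of_nonneg_right (le_max_left _ _) habs)
  · -- u ≤ m : use reflection and pair (-q, -m)
    have hrefl := logConcave_comp_neg hF
    have h1 := one_side hrefl (neg_lt_neg hmq) (by simpa using hFq) (neg_le_neg hum.le)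
    simp only [neg_neg] at h1
    have hexp : (-u - -q)/(-m - -q) = (q - u)/(q - m) := by ring_nf
    rw [hexp] at h1
    have h2 : (q - u)/(q - m) ≤ (|u| + |q|)/(q - m) := by
      apply div_le_div_of_nonneg_right ?_ hqm.le
      have h3 := le_abs_self q
      have h4 := neg_abs_le u
      linarith
    have h5 := rpow_exp_bound hM₂1 hqm (abs_nonneg q) h2
    refine le_trans h1 (le_trans h5 ?_)
    refine mul_le_mul (le_max_right _ _) ?_ (Real.exp_pos _).le
      (le_trans zero_le_one (le_trans hC₂1 (le_max_right _ _)))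
    exact Real.exp_le_exp.2 (mul_le_mul_of_nonneg_right (le_max_right _ _) habs)

lemma gaussPDF_pos (x : ℝ) : 0 < gaussPDF x := by
  have : 0 < Real.sqrt (2 * Real.pi) := Real.sqrt_pos.2 (by positivity)
  exact mul_pos (inv_pos.2 this) (Real.exp_pos _)

lemma gaussPDF_cont : Continuous gaussPDF := by
  unfold gaussPDF
  fun_prop

lemma gaussPDF_lc {x y t : ℝ} (ht0 : 0 ≤ t) (ht1 : t ≤ 1) :
    gaussPDF x ^ (1-t) * gaussPDF y ^ t ≤ gaussPDF ((1-t)*x + t*y) := by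
  have hc : 0 < (Real.sqrt (2 * Real.pi))⁻¹ :=
    inv_pos.2 (Real.sqrt_pos.2 (by positivity))
  set c := (Real.sqrt (2 * Real.pi))⁻¹ with hcdef
  unfold gaussPDF
  rw [Real.mul_rpow hc.le (Real.exp_pos _).le, Real.mul_rpow hc.le (Real.exp_pos _).le,
    ← Real.exp_mul, ← Real.exp_mul]
  have hcc : c ^ (1-t) * c ^ t = c := by
    rw [← Real.rpow_add hc]; norm_num
  calc c ^ (1-t) * Real.exp (-x^2/2 * (1-t)) * (c ^ t * Real.exp (-y^2/2 * t))
      = (c ^ (1-t) * c ^ t) * (Real.exp (-x^2/2 * (1-t)) * Real.exp (-y^2/2 * t)) := by ring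
    _ = c * Real.exp (-x^2/2 * (1-t) + -y^2/2 * t) := by rw [hcc, Real.exp_add]
    _ ≤ c * Real.exp (-((1-t)*x + t*y)^2/2) := by
        refine mul_le_mul_of_nonneg_left (Real.exp_le_exp.2 ?_) hc.le
        nlinarith [sq_nonneg (x - y), mul_nonneg ht0 (sub_nonneg.2 ht1)]

lemma Gmeas {F : ℝ → ℝ} (hFmeas : Measurable F) (x : ℝ) :
    Measurable (fun y => gaussPDF y * (F ((x + y)/Real.sqrt 2) * F ((x - y)/Real.sqrt 2))) := by
  refine gaussPDF_cont.measurable.mul (Measurable.mul ?_ ?_)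
  · exact hFmeas.comp ((measurable_const.add measurable_id).div_const _)
  · exact hFmeas.comp ((measurable_const.sub measurable_id).div_const _)

lemma sqrt_two_ge_one : (1:ℝ) ≤ Real.sqrt 2 := by
  rw [show (1:ℝ) = Real.sqrt 1 by simp]
  exact Real.sqrt_le_sqrt (by norm_num)

lemma abs_div_sqrt_two (u v : ℝ) : |(u + v)/Real.sqrt 2| ≤ |u| + |v| := by
  rw [abs_div, abs_of_nonneg (Real.sqrt_nonneg 2)]
  exact le_trans (div_le_self (abs_nonneg _) sqrt_two_ge_one) (abs_add_le u v)

lemma Gbound {F : ℝ → ℝ} {C B : ℝ} (hF0 : ∀ u, 0 ≤ F u) (hC : 0 ≤ C) (hB : 0 ≤ B)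
    (hCB : ∀ u, F u ≤ C * Real.exp (B * |u|)) (x : ℝ) :
    ∃ D : ℝ, 0 ≤ D ∧ ∀ y,
      gaussPDF y * (F ((x + y)/Real.sqrt 2) * F ((x - y)/Real.sqrt 2))
        ≤ D * Real.exp (-(1/4) * y^2) := by
  set c := (Real.sqrt (2 * Real.pi))⁻¹ with hcdef
  have hc : 0 < c := inv_pos.2 (Real.sqrt_pos.2 (by positivity))
  refine ⟨c * C^2 * Real.exp (2*B*|x|) * Real.exp (4*B^2), by positivity, fun y => ?_⟩
  have ha : |(x + y)/Real.sqrt 2| ≤ |x| + |y| := abs_div_sqrt_two x y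
  have hb : |(x - y)/Real.sqrt 2| ≤ |x| + |y| := by
    have := abs_div_sqrt_two x (-y)
    simpa [sub_eq_add_neg] using this
  have hFa : F ((x + y)/Real.sqrt 2) ≤ C * Real.exp (B * (|x| + |y|)) :=
    le_trans (hCB _) (mul_le_mul_of_nonneg_left
      (Real.exp_le_exp.2 (mul_le_mul_of_nonneg_left ha hB)) hC)
  have hFb : F ((x - y)/Real.sqrt 2) ≤ C * Real.exp (B * (|x| + |y|)) :=
    le_trans (hCB _) (mul_le_mul_of_nonneg_left
      (Real.exp_le_exp.2 (mul_le_mul_of_nonneg_left hb hB)) hC)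
  have h1 : F ((x + y)/Real.sqrt 2) * F ((x - y)/Real.sqrt 2)
      ≤ C^2 * Real.exp (2*B*(|x| + |y|)) := by
    calc F ((x + y)/Real.sqrt 2) * F ((x - y)/Real.sqrt 2)
        ≤ (C * Real.exp (B * (|x| + |y|))) * (C * Real.exp (B * (|x| + |y|))) :=
          mul_le_mul hFa hFb (hF0 _) (by positivity)
      _ = C^2 * Real.exp (2*B*(|x| + |y|)) := by
          rw [show 2*B*(|x| + |y|) = B*(|x| + |y|) + B*(|x| + |y|) by ring, Real.exp_add]
          ring
  calc gaussPDF y * (F ((x + y)/Real.sqrt 2) * F ((x - y)/Real.sqrt 2))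
      ≤ gaussPDF y * (C^2 * Real.exp (2*B*(|x| + |y|))) := by
        exact mul_le_mul_of_nonneg_left h1 (gaussPDF_pos y).le
    _ = (c * C^2 * Real.exp (2*B*|x|)) * Real.exp (-y^2/2 + 2*B*|y|) := by
        unfold gaussPDF
        rw [← hcdef, show 2*B*(|x| + |y|) = 2*B*|x| + 2*B*|y| by ring, Real.exp_add,
          Real.exp_add]
        ring
    _ ≤ (c * C^2 * Real.exp (2*B*|x|)) * (Real.exp (4*B^2) * Real.exp (-(1/4) * y^2)) := by
        rw [← Real.exp_add]
        refine mul_le_mul_of_nonneg_left (Real.exp_le_exp.2 ?_) (by positivity)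
        nlinarith [sq_nonneg (|y|/2 - 2*B), sq_abs y]
    _ = c * C^2 * Real.exp (2*B*|x|) * Real.exp (4*B^2) * Real.exp (-(1/4) * y^2) := by ring

lemma Gintegrable {F : ℝ → ℝ} {C B : ℝ} (hFmeas : Measurable F) (hF0 : ∀ u, 0 ≤ F u)
    (hC : 0 ≤ C) (hB : 0 ≤ B) (hCB : ∀ u, F u ≤ C * Real.exp (B * |u|)) (x : ℝ) :
    Integrable (fun y => gaussPDF y * (F ((x + y)/Real.sqrt 2) * F ((x - y)/Real.sqrt 2))) := by
  obtain ⟨D, hD, hbd⟩ := Gbound hF0 hC hB hCB x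
  refine Integrable.mono' ((integrable_exp_neg_mul_sq (by norm_num : (0:ℝ) < 1/4)).const_mul D)
    ((Gmeas hFmeas x).aestronglyMeasurable) (ae_of_all _ fun y => ?_)
  have hnn : 0 ≤ gaussPDF y * (F ((x + y)/Real.sqrt 2) * F ((x - y)/Real.sqrt 2)) :=
    mul_nonneg (gaussPDF_pos y).le (mul_nonneg (hF0 _) (hF0 _))
  rw [Real.norm_eq_abs, abs_of_nonneg hnn]
  exact hbd y

lemma GbddAbove {F : ℝ → ℝ} {C B : ℝ} (hF0 : ∀ u, 0 ≤ F u)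
    (hC : 0 ≤ C) (hB : 0 ≤ B) (hCB : ∀ u, F u ≤ C * Real.exp (B * |u|)) (x : ℝ) :
    BddAbove (Set.range (fun y =>
      gaussPDF y * (F ((x + y)/Real.sqrt 2) * F ((x - y)/Real.sqrt 2)))) := by
  obtain ⟨D, hD, hbd⟩ := Gbound hF0 hC hB hCB x
  refine ⟨D, ?_⟩
  rintro _ ⟨y, rfl⟩
  refine le_trans (hbd y) ?_
  calc D * Real.exp (-(1/4) * y^2) ≤ D * 1 := by
        refine mul_le_mul_of_nonneg_left ?_ hD
        rw [Real.exp_le_one_iff]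
        nlinarith [sq_nonneg y]
    _ = D := mul_one D

lemma Ghyp {F : ℝ → ℝ} (hF : LogConcaveFun F) {t : ℝ} (ht0 : 0 ≤ t) (ht1 : t ≤ 1)
    (x y u v : ℝ) :
    (gaussPDF u * (F ((x + u)/Real.sqrt 2) * F ((x - u)/Real.sqrt 2))) ^ (1-t)
      * (gaussPDF v * (F ((y + v)/Real.sqrt 2) * F ((y - v)/Real.sqrt 2))) ^ t
    ≤ gaussPDF ((1-t)*u + t*v)
      * (F (((1-t)*x + t*y + ((1-t)*u + t*v))/Real.sqrt 2)
        * F (((1-t)*x + t*y - ((1-t)*u + t*v))/Real.sqrt 2)) := by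
  have e₁ : ((1-t)*x + t*y + ((1-t)*u + t*v))/Real.sqrt 2
      = (1-t)*((x + u)/Real.sqrt 2) + t*((y + v)/Real.sqrt 2) := by ring
  have e₂ : ((1-t)*x + t*y - ((1-t)*u + t*v))/Real.sqrt 2
      = (1-t)*((x - u)/Real.sqrt 2) + t*((y - v)/Real.sqrt 2) := by ring
  rw [e₁, e₂]
  rw [Real.mul_rpow (gaussPDF_pos u).le (mul_nonneg (hF.1 _) (hF.1 _)),
    Real.mul_rpow (gaussPDF_pos v).le (mul_nonneg (hF.1 _) (hF.1 _)),
    Real.mul_rpow (hF.1 _) (hF.1 _), Real.mul_rpow (hF.1 _) (hF.1 _)]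
  have key : gaussPDF u ^ (1-t) * (F ((x + u)/Real.sqrt 2) ^ (1-t) * F ((x - u)/Real.sqrt 2) ^ (1-t))
      * (gaussPDF v ^ t * (F ((y + v)/Real.sqrt 2) ^ t * F ((y - v)/Real.sqrt 2) ^ t))
      = (gaussPDF u ^ (1-t) * gaussPDF v ^ t)
        * ((F ((x + u)/Real.sqrt 2) ^ (1-t) * F ((y + v)/Real.sqrt 2) ^ t)
          * (F ((x - u)/Real.sqrt 2) ^ (1-t) * F ((y - v)/Real.sqrt 2) ^ t)) := by ring
  rw [key]
  refine mul_le_mul (gaussPDF_lc ht0 ht1) ?_ ?_ (gaussPDF_pos _).le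
  · refine mul_le_mul (hF.2 _ _ t ht0 ht1) (hF.2 _ _ t ht0 ht1) ?_ (hF.1 _)
    exact mul_nonneg (Real.rpow_nonneg (hF.1 _) _) (Real.rpow_nonneg (hF.1 _) _)
  · refine mul_nonneg (mul_nonneg ?_ ?_) (mul_nonneg ?_ ?_) <;>
      exact Real.rpow_nonneg (hF.1 _) _

lemma gauss_factor_identity (F : ℝ → ℝ) (x : ℝ) :
    selfConv (fun y => gaussPDF y * F y) x
      = gaussPDF x *
          ∫ y, gaussPDF y * (F ((x + y) / Real.sqrt 2) * F ((x - y) / Real.sqrt 2)) := by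
  set s := Real.sqrt 2 with hsdef
  have hs : s^2 = 2 := Real.sq_sqrt (by norm_num)
  have hs0 : 0 < s := Real.sqrt_pos.2 (by norm_num)
  set Φ : ℝ → ℝ := fun u => gaussPDF u * (F ((x + u)/s) * F ((x - u)/s)) with hΦ
  have hgg : ∀ y : ℝ, gaussPDF (s*x - y) * gaussPDF y = gaussPDF x * gaussPDF (s*y - x) := by
    intro y
    set c := (Real.sqrt (2 * Real.pi))⁻¹ with hcdef
    have expand : ∀ A B : ℝ, (c * Real.exp A) * (c * Real.exp B) = c^2 * Real.exp (A+B) :=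
      fun A B => by rw [Real.exp_add]; ring
    show (c * Real.exp (-(s*x - y)^2/2)) * (c * Real.exp (-y^2/2))
        = (c * Real.exp (-x^2/2)) * (c * Real.exp (-(s*y - x)^2/2))
    rw [expand, expand]
    have harg : (-(s*x - y)^2/2) + (-y^2/2) = (-x^2/2) + (-(s*y - x)^2/2) := by
      linear_combination ((y^2 - x^2)/2) * hs
    rw [harg]
  have hpt : ∀ y : ℝ,
      (gaussPDF (s*x - y) * F (s*x - y)) * (gaussPDF y * F y) = gaussPDF x * Φ (s*y - x) := by
    intro y
    have e1 : (x + (s*y - x))/s = y := by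
      rw [div_eq_iff hs0.ne']
      ring
    have e2 : (x - (s*y - x))/s = s*x - y := by
      rw [div_eq_iff hs0.ne']
      linear_combination (-x) * hs
    rw [hΦ]
    simp only []
    rw [e1, e2]
    have lhs_eq : (gaussPDF (s*x - y) * F (s*x - y)) * (gaussPDF y * F y)
        = (gaussPDF (s*x - y) * gaussPDF y) * (F (s*x - y) * F y) := by ring
    rw [lhs_eq, hgg y]
    ring
  show s * convDens (fun y => gaussPDF y * F y) (fun y => gaussPDF y * F y) (s * x)
      = gaussPDF x * ∫ y, Φ y
  unfold convDens
  have hfun : (fun y => (fun z => gaussPDF z * F z) (s*x - y) * ((fun z => gaussPDF z * F z) y))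
      = fun y => gaussPDF x * Φ (s*y - x) := funext fun y => hpt y
  rw [hfun]
  rw [MeasureTheory.integral_const_mul]
  have hcv : ∫ y, Φ (s*y - x) = s⁻¹ * ∫ y, Φ y := by
    have h1 : (fun y => Φ (s*y - x)) = fun y => (fun z => Φ (z - x)) (s*y) := rfl
    rw [h1, MeasureTheory.Measure.integral_comp_mul_left (fun z => Φ (z - x)) s,
      MeasureTheory.integral_sub_right_eq_self Φ x, smul_eq_mul,
      abs_of_nonneg (inv_nonneg.2 hs0.le)]
  rw [hcv]
  field_simp

lemma twoPoints {F : ℝ → ℝ} (hF0 : ∀ x, 0 ≤ F x)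
    (hmass : ∫ x, gaussPDF x * F x = 1) :
    ∃ p q : ℝ, p < q ∧ 0 < F p ∧ 0 < F q := by
  by_contra hc
  push_neg at hc
  have hsub : Set.Subsingleton {x : ℝ | 0 < F x} := by
    intro a ha b hb
    by_contra hab
    rcases lt_or_gt_of_ne hab with hlt | hgt
    · exact absurd hb (not_lt.2 (hc a b hlt ha))
    · exact absurd ha (not_lt.2 (hc b a hgt hb))
  have hS0 : volume {x : ℝ | 0 < F x} = 0 := Set.Subsingleton.measure_zero hsub _
  have hae : (fun x => gaussPDF x * F x) =ᵐ[volume] 0 := by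
    rw [Filter.EventuallyEq, ae_iff]
    refine measure_mono_null (fun x hx => ?_) hS0
    simp only [Set.mem_setOf_eq, Pi.zero_apply] at hx ⊢
    rcases eq_or_lt_of_le (hF0 x) with h0 | h0
    · exact absurd (by rw [← h0, mul_zero]) hx
    · exact h0
  rw [integral_congr_ae hae] at hmass
  simp at hmass

/-- If `ρ = gF` with `F` log-concave, then `ρ ⊛ ρ = g F₂` with
`F₂(x) = ∫ g(y) F((x+y)/√2) F((x-y)/√2) dy` log-concave. -/
theorem logconcave_factor_propagation (F : ℝ → ℝ) (hFmeas : Measurable F)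
    (hF : LogConcaveFun F)
    (hint : Integrable fun x => gaussPDF x * F x)
    (hmass : ∫ x, gaussPDF x * F x = 1) :
    (∀ x, selfConv (fun y => gaussPDF y * F y) x
        = gaussPDF x *
          ∫ y, gaussPDF y * (F ((x + y) / Real.sqrt 2) * F ((x - y) / Real.sqrt 2))) ∧
    LogConcaveFun
      (fun x => ∫ y, gaussPDF y * (F ((x + y) / Real.sqrt 2) * F ((x - y) / Real.sqrt 2))) := by
  obtain ⟨p, q, hpq, hFp, hFq⟩ := twoPoints hF.1 hmass
  obtain ⟨C, B, hC1, hB0, hCB⟩ := expBound hF hpq hFp hFq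
  have hC0 : (0:ℝ) ≤ C := le_trans zero_le_one hC1
  refine ⟨fun x => gauss_factor_identity F x, ?_, ?_⟩
  · intro x
    exact integral_nonneg fun y =>
      mul_nonneg (gaussPDF_pos y).le (mul_nonneg (hF.1 _) (hF.1 _))
  · intro x y t ht0 ht1
    rcases eq_or_lt_of_le ht0 with rfl | ht0'
    · simp only [sub_zero, Real.rpow_one, Real.rpow_zero, mul_one, zero_mul, add_zero, one_mul]
      exact le_refl _
    rcases eq_or_lt_of_le ht1 with rfl | ht1'
    · simp only [sub_self, Real.rpow_zero, Real.rpow_one, one_mul, zero_mul, zero_add]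
      exact le_refl _
    exact PLfull ht0' ht1' (Gmeas hFmeas x) (Gmeas hFmeas y) (Gmeas hFmeas _)
      (fun u => mul_nonneg (gaussPDF_pos u).le (mul_nonneg (hF.1 _) (hF.1 _)))
      (fun u => mul_nonneg (gaussPDF_pos u).le (mul_nonneg (hF.1 _) (hF.1 _)))
      (fun u => mul_nonneg (gaussPDF_pos u).le (mul_nonneg (hF.1 _) (hF.1 _)))
      (Gintegrable hFmeas hF.1 hC0 hB0 hCB x)
      (Gintegrable hFmeas hF.1 hC0 hB0 hCB y)
      (Gintegrable hFmeas hF.1 hC0 hB0 hCB _)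
      (GbddAbove hF.1 hC0 hB0 hCB x)
      (GbddAbove hF.1 hC0 hB0 hCB y)
      (fun u v => Ghyp hF ht0 ht1 x y u v)
end
end

section
/- Let ρ be a probability density on ℝ with finite second moment, and for t ≥ 0 let P_t*ρ be the density of e^{−t}X + (1 − e^{−2t})^{1/2}G where X has density ρ and G is an independent standard Gaussian. Then for every R > 0, the ψ-function of P_t*ρ satisfies ψ_{P_t*ρ}(R) ≤ ψ_ρ(R/2) + ψ_g(R/2), where g is the standard Gaussian density. -/
open MeasureTheory Real Set

noncomputable section

/-- `ouDens ρ t` is the density of `e^{-t} X + (1 - e^{-2t})^{1/2} G` for `X` with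
density `ρ` and `G` an independent standard Gaussian (the Ornstein–Uhlenbeck flow). -/
def ouDens (ρ : ℝ → ℝ) (t : ℝ) (x : ℝ) : ℝ :=
  ∫ y, ρ y * ((Real.sqrt (2 * Real.pi * (1 - Real.exp (-2 * t))))⁻¹ *
    Real.exp (-(x - Real.exp (-t) * y) ^ 2 / (2 * (1 - Real.exp (-2 * t)))))


section OuPsiBoundHelpers

open Filter
open scoped ENNReal NNReal

lemma gaussPDF_eq : gaussPDF = ProbabilityTheory.gaussianPDFReal 0 1 := by
  funext x
  simp [gaussPDF, ProbabilityTheory.gaussianPDFReal]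

lemma gaussPDF_nonneg (x : ℝ) : 0 ≤ gaussPDF x := by
  unfold gaussPDF; positivity

lemma gaussPDF_even (x : ℝ) : gaussPDF (-x) = gaussPDF x := by
  unfold gaussPDF; rw [neg_sq]

lemma measurable_gaussPDF : Measurable gaussPDF := by
  rw [gaussPDF_eq]; exact ProbabilityTheory.measurable_gaussianPDFReal 0 1

lemma integrable_gaussPDF : Integrable gaussPDF := by
  rw [gaussPDF_eq]; exact ProbabilityTheory.integrable_gaussianPDFReal 0 1

lemma integral_gaussPDF : ∫ x, gaussPDF x = 1 := by
  rw [gaussPDF_eq]; exact ProbabilityTheory.integral_gaussianPDFReal_eq_one 0 one_ne_zero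

lemma psiFun_nonneg_aux (ρ : ℝ → ℝ) (hpos : ∀ x, 0 ≤ ρ x) (R : ℝ) : 0 ≤ psiFun ρ R :=
  setIntegral_nonneg (measurableSet_le measurable_const measurable_abs)
    fun x _ => mul_nonneg (sq_nonneg x) (hpos x)
lemma gauss_aux (x : ℝ) : gaussPDF x = (Real.sqrt (2 * Real.pi))⁻¹ * Real.exp (-2⁻¹ * x ^ 2) := by
  unfold gaussPDF; rw [show -x ^ 2 / 2 = -2⁻¹ * x ^ 2 by ring]

lemma integrable_sq_mul_gaussPDF : Integrable (fun x => x ^ 2 * gaussPDF x) := by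
  have h := integrable_rpow_mul_exp_neg_mul_sq (b := (2 : ℝ)⁻¹) (by norm_num) (s := 2) (by norm_num)
  have h2 : Integrable (fun x : ℝ => x ^ 2 * Real.exp (-2⁻¹ * x ^ 2)) := by
    simpa [Real.rpow_natCast] using h
  refine (h2.const_mul (Real.sqrt (2 * Real.pi))⁻¹).congr
    (Filter.Eventually.of_forall fun x => ?_)
  simp only [gauss_aux]; ring

lemma integrable_mul_gaussPDF : Integrable (fun x => x * gaussPDF x) := by
  have h := integrable_rpow_mul_exp_neg_mul_sq (b := (2 : ℝ)⁻¹) (by norm_num) (s := 1) (by norm_num)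
  have h2 : Integrable (fun x : ℝ => x * Real.exp (-2⁻¹ * x ^ 2)) := by
    have := Real.rpow_natCast
    simpa [Real.rpow_one] using h
  refine (h2.const_mul (Real.sqrt (2 * Real.pi))⁻¹).congr
    (Filter.Eventually.of_forall fun x => ?_)
  simp only [gauss_aux]; ring
lemma hasDerivAt_gaussPDF (x : ℝ) : HasDerivAt gaussPDF (-x * gaussPDF x) x := by
  have h1 : HasDerivAt (fun x : ℝ => -x ^ 2 / 2) (-x) x := by
    have := ((hasDerivAt_pow 2 x).neg).div_const 2
    refine this.congr_deriv ?_
    simp; ring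
  have h2 := (h1.exp).const_mul (Real.sqrt (2 * Real.pi))⁻¹
  refine h2.congr_deriv ?_
  unfold gaussPDF; ring

lemma tendsto_mul_gaussPDF_atTop : Tendsto (fun x => x * gaussPDF x) atTop (nhds 0) := by
  have h := rpow_mul_exp_neg_mul_sq_isLittleO_exp_neg (b := (2:ℝ)⁻¹) (by norm_num) 1
  have h2 : Tendsto (fun x : ℝ => x * Real.exp (-2⁻¹ * x ^ 2)) atTop (nhds 0) := by
    have hexp : Tendsto (fun x : ℝ => Real.exp (-(1/2) * x)) atTop (nhds 0) := by
      have hmul : Tendsto (fun x : ℝ => (1/2 : ℝ) * x) atTop atTop :=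
        Tendsto.const_mul_atTop (by norm_num) tendsto_id
      have := Real.tendsto_exp_neg_atTop_nhds_zero.comp hmul
      refine this.congr fun x => ?_
      simp [Function.comp, neg_mul]
    have := h.trans_tendsto hexp
    simpa [Real.rpow_one] using this
  have h3 := h2.const_mul (Real.sqrt (2 * Real.pi))⁻¹
  rw [mul_zero] at h3
  refine h3.congr fun x => ?_
  unfold gaussPDF
  rw [show -x ^ 2 / 2 = -2⁻¹ * x ^ 2 by ring]
  ring

lemma tendsto_neg_mul_gaussPDF_atBot :
    Tendsto (fun x => -x * gaussPDF x) atBot (nhds 0) := by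
  have := tendsto_mul_gaussPDF_atTop.comp tendsto_neg_atBot_atTop
  refine this.congr fun x => ?_
  simp only [Function.comp]
  unfold gaussPDF
  ring_nf

lemma integral_sq_mul_gaussPDF : ∫ x, x ^ 2 * gaussPDF x = 1 := by
  have hderiv : ∀ x, HasDerivAt (fun x => -x * gaussPDF x)
      ((x ^ 2 - 1) * gaussPDF x) x := by
    intro x
    have := (hasDerivAt_id x).neg.mul (hasDerivAt_gaussPDF x)
    refine this.congr_deriv ?_
    simp only [Pi.neg_apply, id]; ring
  have hint : Integrable (fun x => (x ^ 2 - 1) * gaussPDF x) := by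
    refine (integrable_sq_mul_gaussPDF.sub integrable_gaussPDF).congr
      (Filter.Eventually.of_forall fun x => ?_)
    simp; ring
  have htop : Tendsto (fun x => -x * gaussPDF x) atTop (nhds 0) := by
    have := tendsto_mul_gaussPDF_atTop.neg
    rw [neg_zero] at this
    exact this.congr fun x => by ring
  have key := integral_of_hasDerivAt_of_tendsto hderiv hint
    tendsto_neg_mul_gaussPDF_atBot htop
  rw [sub_zero] at key
  have expand : ∫ x, (x ^ 2 - 1) * gaussPDF x
      = (∫ x, x ^ 2 * gaussPDF x) - ∫ x, gaussPDF x := by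
    rw [← integral_sub integrable_sq_mul_gaussPDF integrable_gaussPDF]
    congr 1; funext x; ring
  rw [expand, integral_gaussPDF] at key
  linarith

lemma integral_odd_eq_zero {f : ℝ → ℝ} (hf : ∀ x, f (-x) = -f x) : ∫ x, f x = 0 := by
  have A : MeasurableEmbedding fun x : ℝ => -x :=
    (Homeomorph.neg ℝ).isClosedEmbedding.measurableEmbedding
  have h1 : ∫ x, f x = ∫ x, f (-x) := by
    conv_lhs => rw [← Measure.map_neg_eq_self (volume : Measure ℝ)]
    exact A.integral_map f
  have h2 : ∫ x, f (-x) = -∫ x, f x := by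
    simp only [hf]
    exact integral_neg f
  linarith [h1, h2]
lemma ofReal_integral_le {α : Type*} [MeasurableSpace α] {μ : Measure α} {f : α → ℝ}
    (hf : ∀ x, 0 ≤ f x) :
    ENNReal.ofReal (∫ x, f x ∂μ) ≤ ∫⁻ x, ENNReal.ofReal (f x) ∂μ := by
  calc ENNReal.ofReal (∫ x, f x ∂μ) ≤ (‖∫ x, f x ∂μ‖₊ : ℝ≥0∞) := Real.ofReal_le_enorm _
    _ ≤ ∫⁻ x, (‖f x‖₊ : ℝ≥0∞) ∂μ := enorm_integral_le_lintegral_enorm _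
    _ = ∫⁻ x, ENNReal.ofReal (f x) ∂μ :=
        lintegral_congr fun x => Real.enorm_eq_ofReal (hf x)

lemma lintegral_kernel_cov (G : ℝ → ℝ≥0∞) (hG : Measurable G) {v : ℝ} (c y : ℝ)
    (hv0 : 0 < v) :
    ∫⁻ x, G x * ENNReal.ofReal ((Real.sqrt (2 * Real.pi * v))⁻¹ *
        Real.exp (-(x - c * y) ^ 2 / (2 * v)))
      = ∫⁻ w, G (c * y + Real.sqrt v * w) * ENNReal.ofReal (gaussPDF w) := by
  set σ := Real.sqrt v with hσdef
  have hσ0 : 0 < σ := Real.sqrt_pos.2 hv0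
  have hσ2 : σ ^ 2 = v := Real.sq_sqrt hv0.le
  set K : ℝ → ℝ := fun x => (Real.sqrt (2 * Real.pi * v))⁻¹ *
      Real.exp (-(x - c * y) ^ 2 / (2 * v)) with hKdef
  have hKcont : Continuous K := by
    apply Continuous.mul continuous_const
    exact (((continuous_id.sub continuous_const).pow 2).neg.div_const _).rexp
  have hKcov : ∀ w, K (c * y + σ * w) = σ⁻¹ * gaussPDF w := by
    intro w
    have h1 : c * y + σ * w - c * y = σ * w := by ring
    have h2 : -(σ * w) ^ 2 / (2 * v) = -w ^ 2 / 2 := by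
      rw [mul_pow, hσ2]
      field_simp
    have h3 : Real.sqrt (2 * Real.pi * v) = Real.sqrt (2 * Real.pi) * σ := by
      rw [hσdef, ← Real.sqrt_mul (by positivity)]
    simp only [hKdef, h1, h2, h3, gaussPDF]
    rw [mul_inv]
    ring
  have hH : Measurable fun x => G x * ENNReal.ofReal (K x) :=
    hG.mul hKcont.measurable.ennreal_ofReal
  have hT : Measurable fun w : ℝ => c * y + σ * w :=
    (measurable_const_mul σ).const_add (c * y)
  have hHT : Measurable fun w => G (c * y + σ * w) * ENNReal.ofReal (K (c * y + σ * w)) :=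
    (hG.comp hT).mul ((hKcont.comp (continuous_const.add
      (continuous_const.mul continuous_id))).measurable.ennreal_ofReal)
  have hmap : Measure.map (fun w : ℝ => c * y + σ * w) volume
      = ENNReal.ofReal |σ⁻¹| • (volume : Measure ℝ) := by
    have hcomp : (fun w : ℝ => c * y + σ * w) = (fun z => c * y + z) ∘ (fun w => σ * w) := rfl
    rw [hcomp, ← Measure.map_map (measurable_const_add _) (measurable_const_mul σ)]
    have h1 : Measure.map (fun w : ℝ => σ * w) volume = ENNReal.ofReal |σ⁻¹| • volume :=
      Real.map_volume_mul_left hσ0.ne'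
    rw [h1, Measure.map_smul, map_add_left_eq_self]
  have key : ∫⁻ w, G (c * y + σ * w) * ENNReal.ofReal (K (c * y + σ * w))
      = ENNReal.ofReal |σ⁻¹| * ∫⁻ x, G x * ENNReal.ofReal (K x) := by
    rw [← smul_eq_mul (ENNReal.ofReal |σ⁻¹|), ← lintegral_smul_measure, ← hmap, lintegral_map hH hT]
  have hσinv : ENNReal.ofReal σ * ENNReal.ofReal |σ⁻¹| = 1 := by
    rw [abs_of_pos (inv_pos.2 hσ0), ← ENNReal.ofReal_mul hσ0.le,
      mul_inv_cancel₀ hσ0.ne', ENNReal.ofReal_one]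
  calc ∫⁻ x, G x * ENNReal.ofReal (K x)
      = ENNReal.ofReal σ * (ENNReal.ofReal |σ⁻¹| * ∫⁻ x, G x * ENNReal.ofReal (K x)) := by
        rw [← mul_assoc, hσinv, one_mul]
    _ = ENNReal.ofReal σ * ∫⁻ w, G (c * y + σ * w) * ENNReal.ofReal (K (c * y + σ * w)) := by
        rw [key]
    _ = ∫⁻ w, ENNReal.ofReal σ * (G (c * y + σ * w) * ENNReal.ofReal (K (c * y + σ * w))) := by
        rw [lintegral_const_mul _ hHT]
    _ = ∫⁻ w, G (c * y + σ * w) * ENNReal.ofReal (gaussPDF w) := by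
        refine lintegral_congr fun w => ?_
        rw [hKcov w, ENNReal.ofReal_mul (inv_nonneg.2 hσ0.le)]
        have hσinv' : ENNReal.ofReal σ * ENNReal.ofReal σ⁻¹ = 1 := by
          rw [← ENNReal.ofReal_mul hσ0.le, mul_inv_cancel₀ hσ0.ne', ENNReal.ofReal_one]
        calc ENNReal.ofReal σ * (G (c * y + σ * w) *
              (ENNReal.ofReal σ⁻¹ * ENNReal.ofReal (gaussPDF w)))
            = (ENNReal.ofReal σ * ENNReal.ofReal σ⁻¹) *
              (G (c * y + σ * w) * ENNReal.ofReal (gaussPDF w)) := by ring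
          _ = G (c * y + σ * w) * ENNReal.ofReal (gaussPDF w) := by rw [hσinv', one_mul]
lemma integral_mul_gaussPDF_zero : ∫ x, x * gaussPDF x = 0 :=
  integral_odd_eq_zero fun x => by rw [gaussPDF_even]; ring

lemma setIntegral_mul_gaussPDF_zero (L : ℝ) :
    ∫ w in {x : ℝ | |x| < L}, w * gaussPDF w = 0 := by
  have hm : MeasurableSet {x : ℝ | |x| < L} := measurableSet_lt measurable_abs measurable_const
  rw [← integral_indicator hm]
  refine integral_odd_eq_zero fun x => ?_
  by_cases h : |x| < L
  · have h' : |(-x)| < L := by rwa [abs_neg]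
    rw [Set.indicator_of_mem (by simpa using h') _, Set.indicator_of_mem (by simpa using h) _]
    rw [gaussPDF_even]; ring
  · have h' : ¬ |(-x)| < L := by rwa [abs_neg]
    rw [Set.indicator_of_notMem (by simpa using h'), Set.indicator_of_notMem (by simpa using h)]
    ring

set_option maxHeartbeats 1000000 in
theorem key_prod_bound (ρ : ℝ → ℝ) (hmeas : Measurable ρ) (hpos : ∀ x, 0 ≤ ρ x)
    (hmass : ∫ x, ρ x = 1) (hmom2 : Integrable fun x => x ^ 2 * ρ x)
    (c σ R : ℝ) (hc0 : 0 < c) (hσ0 : 0 < σ) (hcσ : c ^ 2 + σ ^ 2 = 1) (hR : 0 < R) :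
    ∫⁻ z : ℝ × ℝ, ENNReal.ofReal
        (Set.indicator {x : ℝ | R ≤ |x|} (fun x => x ^ 2) (c * z.1 + σ * z.2) *
          (ρ z.1 * gaussPDF z.2)) ∂(volume.prod volume)
      ≤ ENNReal.ofReal (psiFun ρ (R / 2) + psiFun gaussPDF (R / 2)) := by
  -- basic sets
  set Ec : Set ℝ := {x : ℝ | |x| < R / 2} with hEcdef
  have hEcm : MeasurableSet Ec := measurableSet_lt measurable_abs measurable_const
  have hcompl : Ecᶜ = {x : ℝ | R / 2 ≤ |x|} := by
    ext x; simp [hEcdef, not_lt]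
  -- integrability of ρ
  have hρint : Integrable ρ := by
    by_contra h
    rw [integral_undef h] at hmass; norm_num at hmass
  have hyρ : Integrable (fun y => y * ρ y) := by
    refine (hρint.add hmom2).mono ((measurable_id.mul hmeas).aestronglyMeasurable)
      (Filter.Eventually.of_forall fun y => ?_)
    have h1 : |y| ≤ 1 + y ^ 2 := by nlinarith [sq_nonneg (|y| - 1), sq_abs y, abs_nonneg y]
    have h2 : 0 ≤ ρ y + y ^ 2 * ρ y :=
      add_nonneg (hpos y) (mul_nonneg (sq_nonneg y) (hpos y))
    simp only [norm_eq_abs, abs_mul, abs_of_nonneg (hpos y), Pi.add_apply]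
    rw [abs_of_nonneg h2]
    nlinarith [hpos y]
  -- scalar quantities
  set m2 : ℝ := ∫ y, y ^ 2 * ρ y with hm2def
  set u : ℝ := ∫ y in Ec, y ^ 2 * ρ y with hudef
  set p : ℝ := ∫ y in Ec, ρ y with hpdef
  set vG : ℝ := ∫ w in Ec, w ^ 2 * gaussPDF w with hvGdef
  set q : ℝ := ∫ w in Ec, gaussPDF w with hqdef
  set eρ : ℝ := ∫ y in Ecᶜ, ρ y with heρdef
  set eg : ℝ := ∫ w in Ecᶜ, gaussPDF w with hegdef
  have hpsiρ : psiFun ρ (R / 2) = ∫ y in Ecᶜ, y ^ 2 * ρ y := by rw [psiFun, hcompl]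
  have hpsig : psiFun gaussPDF (R / 2) = ∫ w in Ecᶜ, w ^ 2 * gaussPDF w := by
    rw [psiFun, hcompl]
  -- splitting identities
  have f1 : u + psiFun ρ (R / 2) = m2 := by
    rw [hpsiρ, hudef, hm2def]; exact integral_add_compl hEcm hmom2
  have f2 : vG + psiFun gaussPDF (R / 2) = 1 := by
    rw [hpsig, hvGdef, ← integral_sq_mul_gaussPDF]
    exact integral_add_compl hEcm integrable_sq_mul_gaussPDF
  have f3 : p + eρ = 1 := by
    rw [hpdef, heρdef, ← hmass]; exact integral_add_compl hEcm hρint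
  have f4 : q + eg = 1 := by
    rw [hqdef, hegdef, ← integral_gaussPDF]; exact integral_add_compl hEcm integrable_gaussPDF
  -- Chebyshev bounds
  have f5 : (R / 2) ^ 2 * eρ ≤ psiFun ρ (R / 2) := by
    rw [hpsiρ, heρdef, ← integral_const_mul]
    refine setIntegral_mono_on ((hρint.const_mul _).integrableOn) hmom2.integrableOn
      hEcm.compl fun x hx => ?_
    rw [hcompl] at hx
    have : (R / 2) ^ 2 ≤ x ^ 2 := by
      rw [← sq_abs x]; exact pow_le_pow_left₀ (by positivity) hx 2
    exact mul_le_mul_of_nonneg_right this (hpos x)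
  have f6 : (R / 2) ^ 2 * eg ≤ psiFun gaussPDF (R / 2) := by
    rw [hpsig, hegdef, ← integral_const_mul]
    refine setIntegral_mono_on ((integrable_gaussPDF.const_mul _).integrableOn)
      integrable_sq_mul_gaussPDF.integrableOn hEcm.compl fun x hx => ?_
    rw [hcompl] at hx
    have : (R / 2) ^ 2 ≤ x ^ 2 := by
      rw [← sq_abs x]; exact pow_le_pow_left₀ (by positivity) hx 2
    exact mul_le_mul_of_nonneg_right this (gaussPDF_nonneg x)
  have f7 : u ≤ (R / 2) ^ 2 * p := by
    rw [hudef, hpdef, ← integral_const_mul]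
    refine setIntegral_mono_on hmom2.integrableOn ((hρint.const_mul _).integrableOn)
      hEcm fun x hx => ?_
    have hx' : |x| < R / 2 := hx
    have : x ^ 2 ≤ (R / 2) ^ 2 := by
      rw [← sq_abs x]; exact pow_le_pow_left₀ (abs_nonneg x) hx'.le 2
    exact mul_le_mul_of_nonneg_right this (hpos x)
  have f8 : vG ≤ (R / 2) ^ 2 * q := by
    rw [hvGdef, hqdef, ← integral_const_mul]
    refine setIntegral_mono_on integrable_sq_mul_gaussPDF.integrableOn
      ((integrable_gaussPDF.const_mul _).integrableOn) hEcm fun x hx => ?_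
    have hx' : |x| < R / 2 := hx
    have : x ^ 2 ≤ (R / 2) ^ 2 := by
      rw [← sq_abs x]; exact pow_le_pow_left₀ (abs_nonneg x) hx'.le 2
    exact mul_le_mul_of_nonneg_right this (gaussPDF_nonneg x)
  have hq1 : q ≤ 1 := by
    rw [hqdef, ← integral_gaussPDF]
    exact setIntegral_le_integral integrable_gaussPDF
      (Filter.Eventually.of_forall gaussPDF_nonneg)
  have hp1 : p ≤ 1 := by
    rw [hpdef, ← hmass]
    exact setIntegral_le_integral hρint (Filter.Eventually.of_forall hpos)
  have hu0 : 0 ≤ u := setIntegral_nonneg hEcm fun x _ =>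
    mul_nonneg (sq_nonneg x) (hpos x)
  have hvG0 : 0 ≤ vG := setIntegral_nonneg hEcm fun x _ =>
    mul_nonneg (sq_nonneg x) (gaussPDF_nonneg x)
  have hp0 : 0 ≤ p := setIntegral_nonneg hEcm fun x _ => hpos x
  have hq0 : 0 ≤ q := setIntegral_nonneg hEcm fun x _ => gaussPDF_nonneg x
  have heρ0 : 0 ≤ eρ := setIntegral_nonneg hEcm.compl fun x _ => hpos x
  have heg0 : 0 ≤ eg := setIntegral_nonneg hEcm.compl fun x _ => gaussPDF_nonneg x
  have hpsiρ0 : 0 ≤ psiFun ρ (R / 2) := by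
    rw [hpsiρ]
    exact setIntegral_nonneg hEcm.compl fun x _ => mul_nonneg (sq_nonneg x) (hpos x)
  have hpsig0 : 0 ≤ psiFun gaussPDF (R / 2) := by
    rw [hpsig]
    exact setIntegral_nonneg hEcm.compl fun x _ =>
      mul_nonneg (sq_nonneg x) (gaussPDF_nonneg x)
  -- the real inequality  A - B ≤ ψρ + ψg
  have hA : eρ * vG ≤ psiFun ρ (R / 2) := by
    have h1 : vG ≤ (R / 2) ^ 2 := f8.trans (by nlinarith [sq_nonneg (R / 2)])
    calc eρ * vG ≤ eρ * (R / 2) ^ 2 := mul_le_mul_of_nonneg_left h1 heρ0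
      _ = (R / 2) ^ 2 * eρ := mul_comm _ _
      _ ≤ _ := f5
  have hB : eg * u ≤ psiFun gaussPDF (R / 2) := by
    have h1 : u ≤ (R / 2) ^ 2 := f7.trans (by nlinarith [sq_nonneg (R / 2)])
    calc eg * u ≤ eg * (R / 2) ^ 2 := mul_le_mul_of_nonneg_left h1 heg0
      _ = (R / 2) ^ 2 * eg := mul_comm _ _
      _ ≤ _ := f6
  have hreal : c ^ 2 * m2 + σ ^ 2 - (c ^ 2 * (u * q) + σ ^ 2 * (p * vG))
      ≤ psiFun ρ (R / 2) + psiFun gaussPDF (R / 2) := by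
    set Ψρ := psiFun ρ (R / 2) with hΨρdef
    set Ψg := psiFun gaussPDF (R / 2) with hΨgdef
    have hm : m2 = u + Ψρ := by linarith
    have hqe : q = 1 - eg := by linarith
    have hpe : p = 1 - eρ := by linarith
    have hve : vG = 1 - Ψg := by linarith
    have e1 : c ^ 2 * m2 + σ ^ 2 - (c ^ 2 * (u * q) + σ ^ 2 * (p * vG))
        = c ^ 2 * Ψρ + σ ^ 2 * Ψg + c ^ 2 * (eg * u) + σ ^ 2 * (eρ * vG) := by
      rw [hm, hqe, hpe, hve]; ring
    have e2 : c ^ 2 * (eg * u) ≤ c ^ 2 * Ψg := mul_le_mul_of_nonneg_left hB (sq_nonneg c)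
    have e3 : σ ^ 2 * (eρ * vG) ≤ σ ^ 2 * Ψρ := mul_le_mul_of_nonneg_left hA (sq_nonneg σ)
    have hsρ : c ^ 2 * Ψρ + σ ^ 2 * Ψρ = Ψρ := by
      calc c ^ 2 * Ψρ + σ ^ 2 * Ψρ = (c ^ 2 + σ ^ 2) * Ψρ := by ring
        _ = Ψρ := by rw [hcσ, one_mul]
    have hsg : c ^ 2 * Ψg + σ ^ 2 * Ψg = Ψg := by
      calc c ^ 2 * Ψg + σ ^ 2 * Ψg = (c ^ 2 + σ ^ 2) * Ψg := by ring
        _ = Ψg := by rw [hcσ, one_mul]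
    rw [e1]
    linarith [e2, e3, hsρ, hsg]
  -- product-measure computations
  set P : Measure (ℝ × ℝ) := volume.prod volume with hPdef
  set total : ℝ × ℝ → ℝ := fun z => (c * z.1 + σ * z.2) ^ 2 * (ρ z.1 * gaussPDF z.2)
    with htotdef
  have htot0 : ∀ z, 0 ≤ total z := fun z =>
    mul_nonneg (sq_nonneg _) (mul_nonneg (hpos _) (gaussPDF_nonneg _))
  have heq : total = fun z => c ^ 2 * ((z.1 ^ 2 * ρ z.1) * gaussPDF z.2)
      + (2 * c * σ) * ((z.1 * ρ z.1) * (z.2 * gaussPDF z.2))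
      + σ ^ 2 * (ρ z.1 * (z.2 ^ 2 * gaussPDF z.2)) := by
    funext z; simp only [htotdef]; ring
  have I1 : Integrable (fun z : ℝ × ℝ => (z.1 ^ 2 * ρ z.1) * gaussPDF z.2) P :=
    hmom2.mul_prod integrable_gaussPDF
  have I2 : Integrable (fun z : ℝ × ℝ => (z.1 * ρ z.1) * (z.2 * gaussPDF z.2)) P :=
    hyρ.mul_prod integrable_mul_gaussPDF
  have I3 : Integrable (fun z : ℝ × ℝ => ρ z.1 * (z.2 ^ 2 * gaussPDF z.2)) P :=
    hρint.mul_prod integrable_sq_mul_gaussPDF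
  have Itot : Integrable total P := by
    rw [heq]; exact ((I1.const_mul _).add (I2.const_mul _)).add (I3.const_mul _)
  have Ia : Integrable (fun z : ℝ × ℝ => c ^ 2 * (z.1 ^ 2 * ρ z.1 * gaussPDF z.2)
      + 2 * c * σ * (z.1 * ρ z.1 * (z.2 * gaussPDF z.2))) P :=
    (I1.const_mul _).add (I2.const_mul _)
  have Atot : ∫ z, total z ∂P = c ^ 2 * m2 + σ ^ 2 := by
    rw [heq]
    beta_reduce
    rw [integral_add Ia (I3.const_mul _),
        integral_add (I1.const_mul _) (I2.const_mul _),
        integral_const_mul, integral_const_mul, integral_const_mul, hPdef,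
        integral_prod_mul (f := fun y : ℝ => y ^ 2 * ρ y) (g := gaussPDF),
        integral_prod_mul (f := fun y : ℝ => y * ρ y) (g := fun w : ℝ => w * gaussPDF w),
        integral_prod_mul (f := ρ) (g := fun w : ℝ => w ^ 2 * gaussPDF w),
        integral_gaussPDF, integral_mul_gaussPDF_zero, integral_sq_mul_gaussPDF, hmass,
        ← hm2def]
    ring
  -- restricted versions
  have I1r : Integrable (fun z : ℝ × ℝ => (z.1 ^ 2 * ρ z.1) * gaussPDF z.2)
      ((volume.restrict Ec).prod (volume.restrict Ec)) :=
    hmom2.restrict.mul_prod integrable_gaussPDF.restrict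
  have I2r : Integrable (fun z : ℝ × ℝ => (z.1 * ρ z.1) * (z.2 * gaussPDF z.2))
      ((volume.restrict Ec).prod (volume.restrict Ec)) :=
    hyρ.restrict.mul_prod integrable_mul_gaussPDF.restrict
  have I3r : Integrable (fun z : ℝ × ℝ => ρ z.1 * (z.2 ^ 2 * gaussPDF z.2))
      ((volume.restrict Ec).prod (volume.restrict Ec)) :=
    hρint.restrict.mul_prod integrable_sq_mul_gaussPDF.restrict
  have hrestr : (volume.restrict Ec).prod (volume.restrict Ec) = P.restrict (Ec ×ˢ Ec) :=
    Measure.prod_restrict Ec Ec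
  have Iar : Integrable (fun z : ℝ × ℝ => c ^ 2 * (z.1 ^ 2 * ρ z.1 * gaussPDF z.2)
      + 2 * c * σ * (z.1 * ρ z.1 * (z.2 * gaussPDF z.2)))
      ((volume.restrict Ec).prod (volume.restrict Ec)) :=
    (I1r.const_mul _).add (I2r.const_mul _)
  have Btot : ∫ z in Ec ×ˢ Ec, total z ∂P = c ^ 2 * (u * q) + σ ^ 2 * (p * vG) := by
    rw [← hrestr, heq]
    beta_reduce
    rw [integral_add Iar (I3r.const_mul _),
        integral_add (I1r.const_mul _) (I2r.const_mul _),
        integral_const_mul, integral_const_mul, integral_const_mul,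
        integral_prod_mul (f := fun y : ℝ => y ^ 2 * ρ y) (g := gaussPDF),
        integral_prod_mul (f := fun y : ℝ => y * ρ y) (g := fun w : ℝ => w * gaussPDF w),
        integral_prod_mul (f := ρ) (g := fun w : ℝ => w ^ 2 * gaussPDF w)]
    rw [hEcdef, setIntegral_mul_gaussPDF_zero (R / 2)]
    rw [← hudef, ← hpdef, ← hvGdef, ← hqdef]
    ring
  -- pointwise bound
  set S : Set ℝ := {x : ℝ | R ≤ |x|} with hSdef
  have hSm : MeasurableSet S := measurableSet_le measurable_const measurable_abs
  set Fz : ℝ × ℝ → ℝ := fun z =>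
    Set.indicator S (fun x => x ^ 2) (c * z.1 + σ * z.2) * (ρ z.1 * gaussPDF z.2) with hFzdef
  have hFz0 : ∀ z, 0 ≤ Fz z := fun z =>
    mul_nonneg (Set.indicator_nonneg (fun x _ => sq_nonneg x) _)
      (mul_nonneg (hpos _) (gaussPDF_nonneg _))
  have hrect0 : ∀ z, 0 ≤ (Ec ×ˢ Ec).indicator total z := fun z =>
    Set.indicator_nonneg (fun z _ => htot0 z) z
  have hgeom : ∀ z : ℝ × ℝ, z ∈ Ec ×ˢ Ec → (c * z.1 + σ * z.2) ∉ S := by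
    rintro ⟨y, w⟩ hz hmem
    have hy : |y| < R / 2 := hz.1
    have hw : |w| < R / 2 := hz.2
    have habs : |c * y + σ * w| ≤ c * |y| + σ * |w| := by
      calc |c * y + σ * w| ≤ |c * y| + |σ * w| := abs_add_le _ _
        _ = c * |y| + σ * |w| := by rw [abs_mul, abs_mul, abs_of_pos hc0, abs_of_pos hσ0]
    have hcs2 : c + σ < 2 := by nlinarith [sq_nonneg (c - σ), sq_nonneg (c + σ)]
    have hRle : R ≤ |c * y + σ * w| := hmem
    have h1 : c * |y| ≤ c * (R / 2) := mul_le_mul_of_nonneg_left hy.le hc0.le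
    have h2 : σ * |w| ≤ σ * (R / 2) := mul_le_mul_of_nonneg_left hw.le hσ0.le
    nlinarith [abs_nonneg (c * y + σ * w)]
  have hpoint : ∀ z, Fz z + (Ec ×ˢ Ec).indicator total z ≤ total z := by
    intro z
    by_cases hz : z ∈ Ec ×ˢ Ec
    · rw [Set.indicator_of_mem hz]
      have : Fz z = 0 := by
        simp only [hFzdef]
        rw [Set.indicator_of_notMem (hgeom z hz), zero_mul]
      rw [this, zero_add]
    · rw [Set.indicator_of_notMem hz, add_zero, hFzdef, htotdef]
      refine mul_le_mul_of_nonneg_right ?_ (mul_nonneg (hpos _) (gaussPDF_nonneg _))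
      by_cases hm : (c * z.1 + σ * z.2) ∈ S
      · rw [Set.indicator_of_mem hm]
      · rw [Set.indicator_of_notMem hm]; exact sq_nonneg _
  -- measurability
  have hFzmeas : Measurable Fz := by
    apply Measurable.mul
    · exact (Measurable.indicator (measurable_id.pow_const 2) hSm).comp
        ((measurable_fst.const_mul c).add (measurable_snd.const_mul σ))
    · exact (hmeas.comp measurable_fst).mul (measurable_gaussPDF.comp measurable_snd)
  -- lintegral chain
  have hadd : (∫⁻ z, ENNReal.ofReal (Fz z) ∂P)
      + ∫⁻ z, ENNReal.ofReal ((Ec ×ˢ Ec).indicator total z) ∂P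
      ≤ ∫⁻ z, ENNReal.ofReal (total z) ∂P := by
    rw [← lintegral_add_left hFzmeas.ennreal_ofReal]
    refine lintegral_mono fun z => ?_
    rw [← ENNReal.ofReal_add (hFz0 z) (hrect0 z)]
    exact ENNReal.ofReal_le_ofReal (hpoint z)
  have hTot : ∫⁻ z, ENNReal.ofReal (total z) ∂P = ENNReal.ofReal (c ^ 2 * m2 + σ ^ 2) := by
    rw [← Atot]
    exact (ofReal_integral_eq_lintegral_ofReal Itot (Filter.Eventually.of_forall htot0)).symm
  have hRect : ∫⁻ z, ENNReal.ofReal ((Ec ×ˢ Ec).indicator total z) ∂P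
      = ENNReal.ofReal (c ^ 2 * (u * q) + σ ^ 2 * (p * vG)) := by
    have h1 : ∀ z, ENNReal.ofReal ((Ec ×ˢ Ec).indicator total z)
        = (Ec ×ˢ Ec).indicator (fun z => ENNReal.ofReal (total z)) z := by
      intro z
      by_cases hz : z ∈ Ec ×ˢ Ec
      · rw [Set.indicator_of_mem hz, Set.indicator_of_mem hz]
      · rw [Set.indicator_of_notMem hz, Set.indicator_of_notMem hz, ENNReal.ofReal_zero]
    rw [lintegral_congr h1, lintegral_indicator (hEcm.prod hEcm), ← Btot]
    exact (ofReal_integral_eq_lintegral_ofReal Itot.restrict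
      (Filter.Eventually.of_forall htot0)).symm
  have hBnn : 0 ≤ c ^ 2 * (u * q) + σ ^ 2 * (p * vG) := by positivity
  have hfinal : (∫⁻ z, ENNReal.ofReal (Fz z) ∂P)
      ≤ ENNReal.ofReal (c ^ 2 * m2 + σ ^ 2 - (c ^ 2 * (u * q) + σ ^ 2 * (p * vG))) := by
    rw [ENNReal.ofReal_sub _ hBnn]
    refine ENNReal.le_sub_of_add_le_right ENNReal.ofReal_ne_top ?_
    rw [← hRect, ← hTot]
    exact hadd
  exact hfinal.trans (ENNReal.ofReal_le_ofReal hreal)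

set_option maxHeartbeats 1000000 in
lemma ou_reduction (ρ : ℝ → ℝ) (hmeas : Measurable ρ) (hpos : ∀ x, 0 ≤ ρ x)
    (c v : ℝ) (hv0 : 0 < v) (S : Set ℝ) (hSm : MeasurableSet S) :
    (∫⁻ x in S, ENNReal.ofReal (x ^ 2 * ∫ y, ρ y * ((Real.sqrt (2 * Real.pi * v))⁻¹ *
        Real.exp (-(x - c * y) ^ 2 / (2 * v)))))
      ≤ ∫⁻ z : ℝ × ℝ, ENNReal.ofReal
          (Set.indicator S (fun x => x ^ 2) (c * z.1 + Real.sqrt v * z.2) *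
            (ρ z.1 * gaussPDF z.2)) ∂(volume.prod volume) := by
  have hKcont : Continuous fun p : ℝ × ℝ => (Real.sqrt (2 * Real.pi * v))⁻¹ *
      Real.exp (-(p.1 - c * p.2) ^ 2 / (2 * v)) :=
    continuous_const.mul
      ((((continuous_fst.sub (continuous_const.mul continuous_snd)).pow 2).neg.div_const
        _).rexp)
  have hKnn : ∀ x y : ℝ, 0 ≤ (Real.sqrt (2 * Real.pi * v))⁻¹ *
      Real.exp (-(x - c * y) ^ 2 / (2 * v)) := fun x y => by positivity
  have hG2meas : Measurable (S.indicator fun x : ℝ => ENNReal.ofReal (x ^ 2)) :=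
    Measurable.indicator (measurable_id.pow_const 2).ennreal_ofReal hSm
  calc (∫⁻ x in S, ENNReal.ofReal (x ^ 2 * ∫ y, ρ y * ((Real.sqrt (2 * Real.pi * v))⁻¹ *
        Real.exp (-(x - c * y) ^ 2 / (2 * v)))))
      ≤ ∫⁻ x in S, ENNReal.ofReal (x ^ 2) *
          ∫⁻ y, ENNReal.ofReal (ρ y * ((Real.sqrt (2 * Real.pi * v))⁻¹ *
            Real.exp (-(x - c * y) ^ 2 / (2 * v)))) := by
        refine lintegral_mono fun x => ?_
        rw [ENNReal.ofReal_mul (sq_nonneg x)]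
        exact mul_le_mul_right (ofReal_integral_le fun y =>
          mul_nonneg (hpos y) (hKnn x y)) _
    _ = ∫⁻ x, (S.indicator fun x : ℝ => ENNReal.ofReal (x ^ 2)) x *
          ∫⁻ y, ENNReal.ofReal (ρ y * ((Real.sqrt (2 * Real.pi * v))⁻¹ *
            Real.exp (-(x - c * y) ^ 2 / (2 * v)))) := by
        rw [← lintegral_indicator hSm]
        refine lintegral_congr fun x => ?_
        by_cases hx : x ∈ S
        · rw [Set.indicator_of_mem hx, Set.indicator_of_mem hx]
        · rw [Set.indicator_of_notMem hx, Set.indicator_of_notMem hx, zero_mul]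
    _ = ∫⁻ x, ∫⁻ y, (S.indicator fun x : ℝ => ENNReal.ofReal (x ^ 2)) x *
          ENNReal.ofReal (ρ y * ((Real.sqrt (2 * Real.pi * v))⁻¹ *
            Real.exp (-(x - c * y) ^ 2 / (2 * v)))) := by
        refine lintegral_congr fun x => ?_
        have hin : Measurable fun y => ENNReal.ofReal (ρ y *
            ((Real.sqrt (2 * Real.pi * v))⁻¹ *
              Real.exp (-(x - c * y) ^ 2 / (2 * v)))) :=
          (hmeas.mul (hKcont.comp (continuous_const.prodMk
            continuous_id)).measurable).ennreal_ofReal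
        rw [lintegral_const_mul _ hin]
    _ = ∫⁻ y, ∫⁻ x, (S.indicator fun x : ℝ => ENNReal.ofReal (x ^ 2)) x *
          ENNReal.ofReal (ρ y * ((Real.sqrt (2 * Real.pi * v))⁻¹ *
            Real.exp (-(x - c * y) ^ 2 / (2 * v)))) := by
        refine lintegral_lintegral_swap ?_
        exact ((hG2meas.comp measurable_fst).mul
          (((hmeas.comp measurable_snd).mul hKcont.measurable)).ennreal_ofReal).aemeasurable
    _ = ∫⁻ y, ENNReal.ofReal (ρ y) * ∫⁻ x,
          (S.indicator fun x : ℝ => ENNReal.ofReal (x ^ 2)) x *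
          ENNReal.ofReal ((Real.sqrt (2 * Real.pi * v))⁻¹ *
            Real.exp (-(x - c * y) ^ 2 / (2 * v))) := by
        refine lintegral_congr fun y => ?_
        have hmul : Measurable fun x : ℝ =>
            (S.indicator fun x : ℝ => ENNReal.ofReal (x ^ 2)) x *
            ENNReal.ofReal ((Real.sqrt (2 * Real.pi * v))⁻¹ *
              Real.exp (-(x - c * y) ^ 2 / (2 * v))) :=
          hG2meas.mul ((hKcont.comp (continuous_id.prodMk
            continuous_const)).measurable).ennreal_ofReal
        rw [← lintegral_const_mul _ hmul]
        refine lintegral_congr fun x => ?_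
        rw [ENNReal.ofReal_mul (hpos y)]
        ring
    _ = ∫⁻ y, ENNReal.ofReal (ρ y) * ∫⁻ w,
          (S.indicator fun x : ℝ => ENNReal.ofReal (x ^ 2)) (c * y + Real.sqrt v * w) *
          ENNReal.ofReal (gaussPDF w) := by
        refine lintegral_congr fun y => ?_
        rw [lintegral_kernel_cov _ hG2meas c y hv0]
    _ = ∫⁻ y, ∫⁻ w, ENNReal.ofReal
          (Set.indicator S (fun x => x ^ 2) (c * y + Real.sqrt v * w) *
            (ρ y * gaussPDF w)) := by
        refine lintegral_congr fun y => ?_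
        have hT : Measurable fun w : ℝ => c * y + Real.sqrt v * w :=
          (measurable_const_mul (Real.sqrt v)).const_add (c * y)
        have hmul : Measurable fun w : ℝ =>
            (S.indicator fun x : ℝ => ENNReal.ofReal (x ^ 2)) (c * y + Real.sqrt v * w) *
            ENNReal.ofReal (gaussPDF w) :=
          (hG2meas.comp hT).mul measurable_gaussPDF.ennreal_ofReal
        rw [← lintegral_const_mul _ hmul]
        refine lintegral_congr fun w => ?_
        rw [ENNReal.ofReal_mul (Set.indicator_nonneg (fun a _ => sq_nonneg a) _),
          ENNReal.ofReal_mul (hpos y)]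
        have hind : ENNReal.ofReal (Set.indicator S (fun x => x ^ 2)
            (c * y + Real.sqrt v * w))
            = (S.indicator fun x : ℝ => ENNReal.ofReal (x ^ 2))
                (c * y + Real.sqrt v * w) := by
          by_cases hm : (c * y + Real.sqrt v * w) ∈ S
          · rw [Set.indicator_of_mem hm, Set.indicator_of_mem hm]
          · rw [Set.indicator_of_notMem hm, Set.indicator_of_notMem hm,
              ENNReal.ofReal_zero]
        rw [hind]
        ring
    _ = ∫⁻ z : ℝ × ℝ, ENNReal.ofReal
          (Set.indicator S (fun x => x ^ 2) (c * z.1 + Real.sqrt v * z.2) *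
            (ρ z.1 * gaussPDF z.2)) ∂(volume.prod volume) := by
        refine lintegral_lintegral ?_
        refine Measurable.aemeasurable (Measurable.ennreal_ofReal ?_)
        exact ((Measurable.indicator (measurable_id.pow_const 2) hSm).comp
            ((measurable_fst.const_mul c).add (measurable_snd.const_mul (Real.sqrt v)))).mul
          ((hmeas.comp measurable_fst).mul (measurable_gaussPDF.comp measurable_snd))

end OuPsiBoundHelpers

/-- `ψ_{P_t^*ρ}(R) ≤ ψ_ρ(R/2) + ψ_g(R/2)`. -/
theorem ou_psi_bound (ρ : ℝ → ℝ) (t : ℝ) (ht : 0 < t)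
    (hmeas : Measurable ρ) (hpos : ∀ x, 0 ≤ ρ x) (hmass : ∫ x, ρ x = 1)
    (hmom2 : Integrable fun x => x ^ 2 * ρ x) :
    ∀ R : ℝ, 0 < R →
      psiFun (ouDens ρ t) R ≤ psiFun ρ (R / 2) + psiFun gaussPDF (R / 2) := by
  intro R hR
  have hc0 : 0 < Real.exp (-t) := Real.exp_pos _
  have hv0 : 0 < 1 - Real.exp (-2 * t) := by
    have h1 : Real.exp (-2 * t) < 1 := Real.exp_lt_one_iff.2 (by linarith)
    linarith
  have hσ0 : 0 < Real.sqrt (1 - Real.exp (-2 * t)) := Real.sqrt_pos.2 hv0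
  have hcσ : Real.exp (-t) ^ 2 + Real.sqrt (1 - Real.exp (-2 * t)) ^ 2 = 1 := by
    rw [Real.sq_sqrt hv0.le, sq, ← Real.exp_add]
    ring_nf
  have hKnn : ∀ x y : ℝ, 0 ≤ (Real.sqrt (2 * Real.pi * (1 - Real.exp (-2 * t))))⁻¹ *
      Real.exp (-(x - Real.exp (-t) * y) ^ 2 / (2 * (1 - Real.exp (-2 * t)))) :=
    fun x y => by positivity
  have hKcont : Continuous fun p : ℝ × ℝ =>
      (Real.sqrt (2 * Real.pi * (1 - Real.exp (-2 * t))))⁻¹ *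
        Real.exp (-(p.1 - Real.exp (-t) * p.2) ^ 2 / (2 * (1 - Real.exp (-2 * t)))) :=
    continuous_const.mul
      ((((continuous_fst.sub (continuous_const.mul continuous_snd)).pow 2).neg.div_const
        _).rexp)
  have hOUsm : StronglyMeasurable (ouDens ρ t) := by
    have hsm : StronglyMeasurable (Function.uncurry fun x y : ℝ =>
        ρ y * ((Real.sqrt (2 * Real.pi * (1 - Real.exp (-2 * t))))⁻¹ *
          Real.exp (-(x - Real.exp (-t) * y) ^ 2 / (2 * (1 - Real.exp (-2 * t)))))) :=
      ((hmeas.comp measurable_snd).mul hKcont.measurable).stronglyMeasurable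
    exact hsm.integral_prod_right
  have hOUnn : ∀ x, 0 ≤ ouDens ρ t x := fun x =>
    integral_nonneg fun y => mul_nonneg (hpos y) (hKnn x y)
  have hSm : MeasurableSet {x : ℝ | R ≤ |x|} :=
    measurableSet_le measurable_const measurable_abs
  have step1 : psiFun (ouDens ρ t) R
      = (∫⁻ x in {x : ℝ | R ≤ |x|}, ENNReal.ofReal (x ^ 2 * ouDens ρ t x)).toReal := by
    rw [psiFun]
    exact integral_eq_lintegral_of_nonneg_ae
      (Filter.Eventually.of_forall fun x => mul_nonneg (sq_nonneg x) (hOUnn x))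
      (((measurable_id.pow_const 2).mul hOUsm.measurable).aestronglyMeasurable.restrict)
  have chain : (∫⁻ x in {x : ℝ | R ≤ |x|}, ENNReal.ofReal (x ^ 2 * ouDens ρ t x))
      ≤ ENNReal.ofReal (psiFun ρ (R / 2) + psiFun gaussPDF (R / 2)) := by
    have h1 := ou_reduction ρ hmeas hpos (Real.exp (-t)) (1 - Real.exp (-2 * t)) hv0
      {x : ℝ | R ≤ |x|} hSm
    have h2 := key_prod_bound ρ hmeas hpos hmass hmom2 (Real.exp (-t))
      (Real.sqrt (1 - Real.exp (-2 * t))) R hc0 hσ0 hcσ hR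
    have hEq : (∫⁻ x in {x : ℝ | R ≤ |x|}, ENNReal.ofReal (x ^ 2 * ouDens ρ t x))
        = ∫⁻ x in {x : ℝ | R ≤ |x|}, ENNReal.ofReal (x ^ 2 *
            ∫ y, ρ y * ((Real.sqrt (2 * Real.pi * (1 - Real.exp (-2 * t))))⁻¹ *
              Real.exp (-(x - Real.exp (-t) * y) ^ 2 /
                (2 * (1 - Real.exp (-2 * t)))))) := rfl
    rw [hEq]
    exact h1.trans h2
  rw [step1]
  calc (∫⁻ x in {x : ℝ | R ≤ |x|}, ENNReal.ofReal (x ^ 2 * ouDens ρ t x)).toReal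
      ≤ (ENNReal.ofReal (psiFun ρ (R / 2) + psiFun gaussPDF (R / 2))).toReal :=
        ENNReal.toReal_mono ENNReal.ofReal_ne_top chain
    _ = psiFun ρ (R / 2) + psiFun gaussPDF (R / 2) :=
        ENNReal.toReal_ofReal (add_nonneg (psiFun_nonneg_aux ρ hpos (R / 2))
          (psiFun_nonneg_aux gaussPDF gaussPDF_nonneg (R / 2)))
end
end

section
/- Let ρ be a probability density on ℝ with finite Fisher information I(ρ) < ∞ and finite second moment. Then for every R > 0, ∫_{|x| ≥ R} ρ(x)|ln ρ(x)| dx ≤ 2 I(ρ)^{1/2} ∫_{|x| > R} ρ(x) dx + 2√π (∫_{|x| > R} (1 + x²) ρ(x) dx)^{1/2}. -/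
open MeasureTheory Real Set

noncomputable section

/-- Cauchy–Schwarz for nonnegative real functions. -/
lemma my_cs {μ : Measure ℝ} {f g : ℝ → ℝ}
    (hfm : AEStronglyMeasurable f μ) (hgm : AEStronglyMeasurable g μ)
    (hf0 : 0 ≤ᵐ[μ] f) (hg0 : 0 ≤ᵐ[μ] g)
    (hf2 : Integrable (fun x => f x ^ 2) μ) (hg2 : Integrable (fun x => g x ^ 2) μ) :
    ∫ x, f x * g x ∂μ ≤ Real.sqrt (∫ x, f x ^ 2 ∂μ) * Real.sqrt (∫ x, g x ^ 2 ∂μ) := by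
  have hpq : Real.HolderConjugate 2 2 := ⟨by norm_num, by norm_num, by norm_num⟩
  have h2 : (ENNReal.ofReal (2:ℝ)) = 2 := by norm_num
  have hfL : MemLp f (ENNReal.ofReal (2:ℝ)) μ := by
    rw [h2]; exact (memLp_two_iff_integrable_sq hfm).mpr hf2
  have hgL : MemLp g (ENNReal.ofReal (2:ℝ)) μ := by
    rw [h2]; exact (memLp_two_iff_integrable_sq hgm).mpr hg2
  have h := integral_mul_le_Lp_mul_Lq_of_nonneg hpq hf0 hg0 hfL hgL
  have hrw : ∀ h : ℝ → ℝ, 0 ≤ᵐ[μ] h → ∫ x, h x ^ (2:ℝ) ∂μ = ∫ x, h x ^ 2 ∂μ := by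
    intro h h0
    refine integral_congr_ae ?_
    filter_upwards [h0] with x hx
    rw [show (2:ℝ) = ((2:ℕ):ℝ) by norm_num, Real.rpow_natCast]
  rw [hrw f hf0, hrw g hg0] at h
  have hIf : 0 ≤ ∫ x, f x ^ 2 ∂μ := integral_nonneg fun x => sq_nonneg _
  have hIg : 0 ≤ ∫ x, g x ^ 2 ∂μ := integral_nonneg fun x => sq_nonneg _
  calc ∫ x, f x * g x ∂μ ≤ (∫ x, f x ^ 2 ∂μ) ^ (1/(2:ℝ)) * (∫ x, g x ^ 2 ∂μ) ^ (1/(2:ℝ)) := h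
    _ = _ := by rw [← Real.sqrt_eq_rpow, ← Real.sqrt_eq_rpow]

/-- A differentiable integrable function with integrable derivative is bounded by ∫|deriv|. -/
lemma my_sup {g : ℝ → ℝ} (hd : Differentiable ℝ g) (hg0 : ∀ x, 0 ≤ g x)
    (hgi : Integrable g) (hgi' : Integrable (deriv g)) (x : ℝ) :
    g x ≤ ∫ y, |deriv g y| := by
  have hFTC : ∀ b : ℝ, g b = g x + ∫ t in x..b, deriv g t := by
    intro b
    rw [intervalIntegral.integral_deriv_eq_sub (fun t _ => hd t)
      (hgi'.intervalIntegrable)]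
    ring
  have htend : Filter.Tendsto g Filter.atTop (nhds (g x + ∫ t in Ioi x, deriv g t)) := by
    have h2 := intervalIntegral_tendsto_integral_Ioi x hgi'.integrableOn Filter.tendsto_id
    have h3 := h2.const_add (g x)
    refine h3.congr fun b => ?_
    exact (hFTC b).symm
  set L := g x + ∫ t in Ioi x, deriv g t with hLdef
  have hL0 : L = 0 := by
    by_contra hne
    have hLnn : 0 ≤ L := ge_of_tendsto htend (Filter.Eventually.of_forall hg0)
    have hLpos : 0 < L := lt_of_le_of_ne hLnn (Ne.symm hne)
    have hev : ∀ᶠ b in Filter.atTop, L/2 ≤ g b :=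
      htend.eventually (eventually_ge_nhds (by linarith))
    obtain ⟨M, hM⟩ := hev.exists_forall_of_atTop
    have hconst : Integrable (fun _ : ℝ => L/2) (volume.restrict (Ioi M)) := by
      refine Integrable.mono' hgi.integrableOn aestronglyMeasurable_const ?_
      refine (ae_restrict_iff' measurableSet_Ioi).mpr (Filter.Eventually.of_forall ?_)
      intro y hy
      rw [Real.norm_of_nonneg (by positivity)]
      exact hM y (le_of_lt hy)
    rcases integrable_const_iff.mp hconst with h | h
    · exact absurd h (by positivity)
    · have h := h.measure_univ_lt_top
      rw [Measure.restrict_apply_univ, Real.volume_Ioi] at h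
      exact absurd h (by simp)
  have hgx : g x = -∫ t in Ioi x, deriv g t := by linarith [hLdef ▸ hL0]
  calc g x = -∫ t in Ioi x, deriv g t := hgx
    _ ≤ |∫ t in Ioi x, deriv g t| := neg_le_abs _
    _ ≤ ∫ t in Ioi x, |deriv g t| := by
        simpa using norm_integral_le_integral_norm (μ := volume.restrict (Ioi x)) (deriv g)
    _ ≤ ∫ y, |deriv g y| := setIntegral_le_integral hgi'.abs
        (Filter.Eventually.of_forall fun y => abs_nonneg _)


lemma my_rho_sup (ρ : ℝ → ℝ) (hmeas : Measurable ρ) (hpos : ∀ x, 0 ≤ ρ x)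
    (hmass : ∫ x, ρ x = 1)
    (hdiff : Differentiable ℝ fun x => Real.sqrt (ρ x))
    (hI : Integrable fun x => (deriv (fun y => Real.sqrt (ρ y)) x) ^ 2)
    (x : ℝ) : ρ x ≤ Real.sqrt (fisherInfo ρ) := by
  set u : ℝ → ℝ := fun x => Real.sqrt (ρ x) with hu
  set u' : ℝ → ℝ := deriv u with hu'
  have hρu : ∀ y, ρ y = u y ^ 2 := fun y => (Real.sq_sqrt (hpos y)).symm
  have hInt : Integrable ρ := by
    by_contra h
    rw [integral_undef h] at hmass; norm_num at hmass
  set g : ℝ → ℝ := fun y => u y ^ 2 with hg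
  have hgeq : g = ρ := funext fun y => (hρu y).symm
  have hd : Differentiable ℝ g := fun y => ((hdiff y).hasDerivAt.pow 2).differentiableAt
  have hderiv : ∀ y, deriv g y = 2 * u y * u' y := by
    intro y
    have := ((hdiff y).hasDerivAt.pow 2).deriv
    show deriv (u ^ 2) y = _
    rw [this]; norm_num; exact Or.inl rfl
  have hu'meas : Measurable u' := measurable_deriv u
  have humeas : Measurable u := hdiff.continuous.measurable
  have hu2 : Integrable (fun y => u y ^ 2) := by
    rw [← hgeq] at hInt; exact hInt
  have hgi' : Integrable (deriv g) := by
    refine Integrable.mono' (hu2.add hI) (measurable_deriv g).aestronglyMeasurable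
      (Filter.Eventually.of_forall fun y => ?_)
    simp only [Pi.add_apply]
    rw [hderiv y, Real.norm_eq_abs]
    have h2 : |2 * u y * u' y| = 2 * |u y| * |u' y| := by
      rw [abs_mul, abs_mul]; norm_num
    rw [h2]
    nlinarith [sq_nonneg (|u y| - |u' y|), sq_abs (u y), sq_abs (u' y)]
  have hsup := my_sup hd (fun y => sq_nonneg _) (by rw [hgeq]; exact hInt) hgi' x
  have hcs : ∫ y, |deriv g y| ≤ Real.sqrt (fisherInfo ρ) := by
    have h1 : ∀ y, |deriv g y| = (2 * |u y|) * |u' y| := by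
      intro y; rw [hderiv y, abs_mul, abs_mul]; norm_num
    have hcs2 := my_cs (μ := volume) (f := fun y => 2 * |u y|) (g := fun y => |u' y|)
      ((humeas.abs.const_mul 2).aestronglyMeasurable) (hu'meas.abs.aestronglyMeasurable)
      (Filter.Eventually.of_forall fun y => by positivity)
      (Filter.Eventually.of_forall fun y => abs_nonneg _)
      (by simpa [mul_pow, sq_abs, show ((2:ℝ))^2 = 4 by norm_num] using hu2.const_mul 4)
      (by simpa [sq_abs] using hI)
    calc ∫ y, |deriv g y| = ∫ y, (2 * |u y|) * |u' y| := by simp_rw [h1]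
      _ ≤ Real.sqrt (∫ y, (2 * |u y|) ^ 2) * Real.sqrt (∫ y, |u' y| ^ 2) := hcs2
      _ = Real.sqrt (fisherInfo ρ) := by
          have huint : ∫ y, u y ^ 2 = 1 := by simp_rw [← hρu]; exact hmass
          have e1 : ∫ y, (2 * |u y|) ^ 2 = 4 := by
            simp_rw [mul_pow, sq_abs]
            rw [integral_const_mul, huint]; norm_num
          have e2 : ∫ y, |u' y| ^ 2 = ∫ y, u' y ^ 2 := by simp_rw [sq_abs]
          have h4 : Real.sqrt 4 = 2 := by
            rw [show (4:ℝ) = 2^2 by norm_num, Real.sqrt_sq (by norm_num : (0:ℝ) ≤ 2)]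
          rw [e1, e2, fisherInfo, Real.sqrt_mul (by norm_num : (0:ℝ) ≤ 4), h4]
  calc ρ x = g x := hρu x
    _ ≤ ∫ y, |deriv g y| := hsup
    _ ≤ Real.sqrt (fisherInfo ρ) := hcs


/-- if `I(ρ) < ∞` and `ρ` has finite second moment, then for `R > 0`,
`∫_{|x|≥R} ρ |ln ρ| ≤ 2 I(ρ)^{1/2} ∫_{|x|>R} ρ + 2√π (∫_{|x|>R} (1+x²) ρ)^{1/2}`. -/
theorem tail_entropy_bound (ρ : ℝ → ℝ)
    (hmeas : Measurable ρ) (hpos : ∀ x, 0 ≤ ρ x) (hmass : ∫ x, ρ x = 1)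
    (hdiff : Differentiable ℝ fun x => Real.sqrt (ρ x))
    (hI : Integrable fun x => (deriv (fun y => Real.sqrt (ρ y)) x) ^ 2)
    (hmom2 : Integrable fun x => x ^ 2 * ρ x)
    (R : ℝ) (hR : 0 < R) :
    ∫ x in {x : ℝ | R ≤ |x|}, ρ x * |Real.log (ρ x)|
      ≤ 2 * Real.sqrt (fisherInfo ρ) * (∫ x in {x : ℝ | R < |x|}, ρ x)
        + 2 * Real.sqrt Real.pi *
          Real.sqrt (∫ x in {x : ℝ | R < |x|}, (1 + x ^ 2) * ρ x) := by
  set I := Real.sqrt (fisherInfo ρ) with hIdef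
  have hInn : 0 ≤ I := Real.sqrt_nonneg _
  have hsup : ∀ x, ρ x ≤ I := my_rho_sup ρ hmeas hpos hmass hdiff hI
  set S : Set ℝ := {x : ℝ | R ≤ |x|} with hSdef
  set S' : Set ℝ := {x : ℝ | R < |x|} with hS'def
  have hSmeas : MeasurableSet S := (isClosed_le continuous_const continuous_abs).measurableSet
  have hS'meas : MeasurableSet S' := (isOpen_lt continuous_const continuous_abs).measurableSet
  have hae : S =ᵐ[volume] S' := by
    rw [ae_eq_set]
    constructor
    · refine measure_mono_null (fun x hx => ?_) (Set.Finite.measure_zero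
        ((Set.finite_singleton (-R)).insert R) volume)
      obtain ⟨h1, h2⟩ := hx
      simp only [hSdef, hS'def, mem_setOf_eq, not_lt] at h1 h2
      have : |x| = R := le_antisymm h2 h1
      rcases abs_eq hR.le |>.mp this with h | h
      · exact Set.mem_insert_iff.mpr (Or.inl h)
      · exact Set.mem_insert_iff.mpr (Or.inr (Set.mem_singleton_iff.mpr h))
    · have : S' \ S = ∅ := Set.diff_eq_empty.mpr fun x hx => show R ≤ |x| from le_of_lt hx
      rw [this]; simp
  -- integrability facts
  have hInt : Integrable ρ := by
    by_contra h
    rw [integral_undef h] at hmass; norm_num at hmass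
  have h1ρ : Integrable (fun x => (1 + x ^ 2) * ρ x) := by
    have := hInt.add hmom2
    refine this.congr (Filter.Eventually.of_forall fun x => ?_)
    simp; ring
  have hinv : Integrable (fun x : ℝ => (1 + x ^ 2)⁻¹) := integrable_inv_one_add_sq
  have h1x2pos : ∀ x : ℝ, (0:ℝ) < 1 + x ^ 2 := fun x => by positivity
  have hsqrtmeas : Measurable fun x => Real.sqrt (ρ x) := hmeas.sqrt
  have hsqrtInt : Integrable (fun x => Real.sqrt (ρ x)) := by
    refine Integrable.mono' ((h1ρ.add hinv).const_mul (1/2)) hsqrtmeas.aestronglyMeasurable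
      (Filter.Eventually.of_forall fun x => ?_)
    rw [Real.norm_of_nonneg (Real.sqrt_nonneg _)]
    have heq : ρ x = ((1 + x ^ 2) * ρ x) * (1 + x ^ 2)⁻¹ := by
      field_simp
    rw [heq, Real.sqrt_mul (mul_nonneg (by positivity) (hpos x))]
    have h1 := Real.sqrt_nonneg ((1 + x ^ 2) * ρ x)
    have h2 := Real.sqrt_nonneg ((1 + x ^ 2 : ℝ)⁻¹)
    have h3 : Real.sqrt ((1 + x ^ 2) * ρ x) ^ 2 = (1 + x ^ 2) * ρ x :=
      Real.sq_sqrt (mul_nonneg (by positivity) (hpos x))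
    have h4 : Real.sqrt ((1 + x ^ 2 : ℝ)⁻¹) ^ 2 = (1 + x ^ 2 : ℝ)⁻¹ :=
      Real.sq_sqrt (by positivity)
    simp only [Pi.add_apply]
    nlinarith [sq_nonneg (Real.sqrt ((1 + x ^ 2) * ρ x) - Real.sqrt ((1 + x ^ 2 : ℝ)⁻¹))]
  -- pointwise key bound
  have key : ∀ x, ρ x * |Real.log (ρ x)| ≤ I * ρ x + 2 * Real.sqrt (ρ x) := by
    intro x
    rcases le_or_gt 1 (ρ x) with h1 | h1
    · have hlog : |Real.log (ρ x)| = Real.log (ρ x) :=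
        abs_of_nonneg (Real.log_nonneg h1)
      have h2 : Real.log (ρ x) ≤ ρ x - 1 := Real.log_le_sub_one_of_pos (by linarith)
      have h3 : Real.log (ρ x) ≤ I := le_trans h2 (by linarith [hsup x])
      have := Real.sqrt_nonneg (ρ x)
      nlinarith [hpos x]
    · rcases eq_or_lt_of_le (hpos x) with h0 | h0
      · rw [← h0]; simp
      · have hlog : |Real.log (ρ x)| = -Real.log (ρ x) :=
          abs_of_nonpos (Real.log_nonpos (hpos x) h1.le)
        have hsq : 0 < Real.sqrt (ρ x) := Real.sqrt_pos.mpr h0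
        have h2 : Real.log ((Real.sqrt (ρ x))⁻¹) ≤ (Real.sqrt (ρ x))⁻¹ - 1 :=
          Real.log_le_sub_one_of_pos (by positivity)
        rw [Real.log_inv] at h2
        have h3 : Real.log (Real.sqrt (ρ x)) = Real.log (ρ x) / 2 :=
          Real.log_sqrt (hpos x)
        have h4 : -Real.log (ρ x) ≤ 2 * (Real.sqrt (ρ x))⁻¹ := by
          rw [h3] at h2
          have hin : (0:ℝ) ≤ (Real.sqrt (ρ x))⁻¹ := inv_nonneg.mpr hsq.le
          linarith
        have h5 : ρ x * (Real.sqrt (ρ x))⁻¹ = Real.sqrt (ρ x) := by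
          rw [inv_eq_one_div, mul_one_div, eq_comm, eq_div_iff hsq.ne',
            Real.mul_self_sqrt (hpos x)]
        calc ρ x * |Real.log (ρ x)| = ρ x * (-Real.log (ρ x)) := by rw [hlog]
          _ ≤ ρ x * (2 * (Real.sqrt (ρ x))⁻¹) :=
              mul_le_mul_of_nonneg_left h4 (hpos x)
          _ = 2 * Real.sqrt (ρ x) := by rw [← mul_assoc, mul_comm (ρ x) 2, mul_assoc, h5]
          _ ≤ I * ρ x + 2 * Real.sqrt (ρ x) := by nlinarith [hpos x, hInn]
  -- integrability of LHS on S and RHS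
  have hRHSint : Integrable (fun x => I * ρ x + 2 * Real.sqrt (ρ x)) :=
    (hInt.const_mul I).add (hsqrtInt.const_mul 2)
  have hLHSint : Integrable (fun x => ρ x * |Real.log (ρ x)|) := by
    refine Integrable.mono' hRHSint (hmeas.mul (hmeas.log.abs)).aestronglyMeasurable
      (Filter.Eventually.of_forall fun x => ?_)
    rw [Real.norm_of_nonneg (mul_nonneg (hpos x) (abs_nonneg _))]
    exact key x
  -- Cauchy-Schwarz for the tail of sqrt ρ
  have hCS : ∫ x in S, Real.sqrt (ρ x)
      ≤ Real.sqrt (∫ x in S', (1 + x ^ 2) * ρ x) * Real.sqrt Real.pi := by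
    set f : ℝ → ℝ := fun x => Real.sqrt ((1 + x ^ 2) * ρ x) with hf
    set g : ℝ → ℝ := fun x => Real.sqrt ((1 + x ^ 2 : ℝ)⁻¹) with hg
    have hfg : ∀ x, f x * g x = Real.sqrt (ρ x) := by
      intro x
      rw [hf, hg, ← Real.sqrt_mul (mul_nonneg (by positivity) (hpos x))]
      congr 1
      field_simp
    have hfm : Measurable f := ((measurable_const.add (measurable_id.pow_const 2)).mul hmeas).sqrt
    have hgm : Measurable g := ((measurable_const.add (measurable_id.pow_const 2)).inv).sqrt
    have hf2 : ∀ x, f x ^ 2 = (1 + x ^ 2) * ρ x :=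
      fun x => Real.sq_sqrt (mul_nonneg (by positivity) (hpos x))
    have hg2 : ∀ x, g x ^ 2 = (1 + x ^ 2 : ℝ)⁻¹ := fun x => Real.sq_sqrt (by positivity)
    have h := my_cs (μ := volume.restrict S) hfm.aestronglyMeasurable hgm.aestronglyMeasurable
      (Filter.Eventually.of_forall fun x => Real.sqrt_nonneg _)
      (Filter.Eventually.of_forall fun x => Real.sqrt_nonneg _)
      (by simp_rw [hf2]; exact h1ρ.integrableOn)
      (by simp_rw [hg2]; exact hinv.integrableOn)
    simp_rw [hfg, hf2, hg2] at h
    refine le_trans h (mul_le_mul ?_ ?_ (Real.sqrt_nonneg _) (Real.sqrt_nonneg _))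
    · rw [setIntegral_congr_set hae]
    · refine Real.sqrt_le_sqrt ?_
      rw [← integral_univ_inv_one_add_sq]
      exact setIntegral_le_integral hinv
        (Filter.Eventually.of_forall fun x => by positivity)
  -- combine
  have hstep1 : ∫ x in S, ρ x * |Real.log (ρ x)|
      ≤ ∫ x in S, (I * ρ x + 2 * Real.sqrt (ρ x)) :=
    setIntegral_mono hLHSint.integrableOn hRHSint.integrableOn key
  have hsplit : ∫ x in S, (I * ρ x + 2 * Real.sqrt (ρ x))
      = I * (∫ x in S, ρ x) + 2 * ∫ x in S, Real.sqrt (ρ x) := by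
    have hc1 : ∫ x in S, I * ρ x = I * ∫ x in S, ρ x := by
      simpa [smul_eq_mul] using integral_smul (μ := volume.restrict S) I ρ
    have hc2 : ∫ x in S, 2 * Real.sqrt (ρ x) = 2 * ∫ x in S, Real.sqrt (ρ x) := by
      simpa [smul_eq_mul] using
        integral_smul (μ := volume.restrict S) (2:ℝ) (fun x => Real.sqrt (ρ x))
    rw [integral_add ((hInt.const_mul I).integrableOn) ((hsqrtInt.const_mul 2).integrableOn),
      hc1, hc2]
  have hρS : ∫ x in S, ρ x = ∫ x in S', ρ x := setIntegral_congr_set hae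
  have hρS'nn : 0 ≤ ∫ x in S', ρ x := setIntegral_nonneg hS'meas fun x _ => hpos x
  calc ∫ x in S, ρ x * |Real.log (ρ x)|
      ≤ I * (∫ x in S, ρ x) + 2 * ∫ x in S, Real.sqrt (ρ x) := by
        rw [← hsplit]; exact hstep1
    _ ≤ 2 * I * (∫ x in S', ρ x) + 2 * Real.sqrt Real.pi *
          Real.sqrt (∫ x in S', (1 + x ^ 2) * ρ x) := by
        have e2 : (0:ℝ) ≤ I * ∫ x in S', ρ x := mul_nonneg hInn hρS'nn
        have hA : I * (∫ x in S, ρ x) ≤ 2 * I * (∫ x in S', ρ x) := by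
          rw [hρS]; linarith [e2]
        have hB : 2 * (∫ x in S, Real.sqrt (ρ x))
            ≤ 2 * Real.sqrt Real.pi * Real.sqrt (∫ x in S', (1 + x ^ 2) * ρ x) := by
          calc 2 * (∫ x in S, Real.sqrt (ρ x))
              ≤ 2 * (Real.sqrt (∫ x in S', (1 + x ^ 2) * ρ x) * Real.sqrt Real.pi) :=
                mul_le_mul_of_nonneg_left hCS (by norm_num)
            _ = 2 * Real.sqrt Real.pi * Real.sqrt (∫ x in S', (1 + x ^ 2) * ρ x) := by ring
        exact add_le_add hA hB
end
end
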